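/- arXiv:2503.17496 — 10 statements merged into one kernel-verified Lean document; each statement's English description precedes it below -/
import Mathlib

section
/- Let A ∈ ℂ^{n×n}, B ∈ ℂ^{m×m}, C, X ∈ ℂ^{m×n} with XA − BX = C, and let H = [[A, 0], [C, B]]. Then for every polynomial q ∈ ℂ[x], q(H) = [[q(A), 0], [X·q(A) − q(B)·X, q(B)]]; in particular the diagonal blocks of q(H) are q(A) and q(B) and its lower-left block is X·q(A) − q(B)·X. -/
open Polynomial Matrix

lemma aeval_block_sylvester_main {n m : ℕ}
    (A : Matrix (Fin n) (Fin n) ℂ) (B : Matrix (Fin m) (Fin m) ℂ)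
    (C X : Matrix (Fin m) (Fin n) ℂ)
    (hX : X * A - B * X = C)
    (q : Polynomial ℂ) :
    aeval (fromBlocks A 0 C B) q =
        fromBlocks (aeval A q) 0 (X * aeval A q - aeval B q * X) (aeval B q) := by
  induction q using Polynomial.induction_on with
  | C a =>
      have h0 : X * (a • (1 : Matrix (Fin n) (Fin n) ℂ))
          - (a • (1 : Matrix (Fin m) (Fin m) ℂ)) * X = 0 := by
        simp [Matrix.mul_smul, Matrix.smul_mul]
      simp only [aeval_C, Algebra.algebraMap_eq_smul_one, h0]
      rw [← Matrix.fromBlocks_one, Matrix.fromBlocks_smul]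
      simp
  | add p r hp hr =>
      rw [map_add, map_add (aeval A), map_add (aeval B), hp, hr, Matrix.fromBlocks_add]
      refine Matrix.fromBlocks_inj.mpr ⟨rfl, by simp, ?_, rfl⟩
      simp only [Matrix.mul_add, Matrix.add_mul]
      abel
  | monomial k a h =>
      rw [pow_succ, ← mul_assoc, _root_.map_mul, _root_.map_mul (aeval A),
        _root_.map_mul (aeval B), h, aeval_X, aeval_X, aeval_X, Matrix.fromBlocks_multiply]
      refine Matrix.fromBlocks_inj.mpr ⟨by simp, by simp, ?_, by simp⟩
      rw [← hX]
      simp only [Matrix.sub_mul, Matrix.mul_sub, Matrix.add_mul, Matrix.mul_add,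
        Matrix.mul_assoc]
      abel

/-- If `X*A - B*X = C` and `H = [[A, 0], [C, B]]`, then for every polynomial `q`,
`q(H) = [[q(A), 0], [X*q(A) - q(B)*X, q(B)]]`; in particular, the diagonal blocks of `q(H)` are
`q(A)` and `q(B)`, and its lower-left block is `X*q(A) - q(B)*X`. -/
theorem aeval_block_sylvester {n m : ℕ}
    (A : Matrix (Fin n) (Fin n) ℂ) (B : Matrix (Fin m) (Fin m) ℂ)
    (C X : Matrix (Fin m) (Fin n) ℂ)
    (hX : X * A - B * X = C)
    (q : Polynomial ℂ) :
    Polynomial.aeval (Matrix.fromBlocks A 0 C B) q =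
        Matrix.fromBlocks (Polynomial.aeval A q) 0
          (X * Polynomial.aeval A q - Polynomial.aeval B q * X) (Polynomial.aeval B q) ∧
      (Polynomial.aeval (Matrix.fromBlocks A 0 C B) q).toBlocks₁₁ = Polynomial.aeval A q ∧
      (Polynomial.aeval (Matrix.fromBlocks A 0 C B) q).toBlocks₂₂ = Polynomial.aeval B q ∧
      (Polynomial.aeval (Matrix.fromBlocks A 0 C B) q).toBlocks₂₁ =
        X * Polynomial.aeval A q - Polynomial.aeval B q * X := by
  have h := aeval_block_sylvester_main A B C X hX q
  refine ⟨h, ?_, ?_, ?_⟩ <;> rw [h] <;>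
    simp [Matrix.toBlocks_fromBlocks₁₁, Matrix.toBlocks_fromBlocks₂₂,
      Matrix.toBlocks_fromBlocks₂₁]
end

section
/- Let A ∈ ℂ^{n×n}, B ∈ ℂ^{m×m}, C, X ∈ ℂ^{m×n} with XA − BX = C, and let H = [[A, 0], [C, B]]. If a polynomial q ∈ ℂ[x] satisfies q(A) = I_n and q(B) = −I_m, then q(H) = [[I_n, 0], [2X, −I_m]]; in particular the lower-left m×n block of q(H) equals 2X. -/
open Matrix Polynomial

private lemma conj_aeval {N : Type*} [Fintype N] [DecidableEq N]
    (S S' M : Matrix N N ℂ) (h1 : S * S' = 1) (h2 : S' * S = 1) (q : Polynomial ℂ) :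
    Polynomial.aeval (S * M * S') q = S * Polynomial.aeval M q * S' := by
  induction q using Polynomial.induction_on' with
  | add p r hp hr => simp [hp, hr, mul_add, add_mul]
  | monomial k a =>
      have hpow : ∀ k : ℕ, (S * M * S') ^ k = S * M ^ k * S' := by
        intro k
        induction k with
        | zero => simp [h1]
        | succ k ih =>
            rw [pow_succ, ih, pow_succ,
              show S * M ^ k * S' * (S * M * S') = S * M ^ k * (S' * S) * (M * S') by
                simp only [Matrix.mul_assoc], h2]
            simp [Matrix.mul_assoc]
      simp only [aeval_monomial, hpow, Algebra.algebraMap_eq_smul_one,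
        smul_mul_assoc, one_mul, mul_smul_comm]

private lemma diag_aeval {n m : ℕ} (A : Matrix (Fin n) (Fin n) ℂ)
    (B : Matrix (Fin m) (Fin m) ℂ) (q : Polynomial ℂ) :
    Polynomial.aeval (Matrix.fromBlocks A 0 0 B) q =
      Matrix.fromBlocks (Polynomial.aeval A q) 0 0 (Polynomial.aeval B q) := by
  induction q using Polynomial.induction_on' with
  | add p r hp hr => simp [hp, hr, Matrix.fromBlocks_add]
  | monomial k a =>
      have hpow : ∀ k : ℕ, (Matrix.fromBlocks A 0 0 B : Matrix _ _ ℂ) ^ k =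
          Matrix.fromBlocks (A ^ k) 0 0 (B ^ k) := by
        intro k
        induction k with
        | zero => simp [Matrix.fromBlocks_one]
        | succ k ih => rw [pow_succ, ih, Matrix.fromBlocks_multiply]; simp [← pow_succ]
      simp [aeval_monomial, hpow, Algebra.algebraMap_eq_smul_one,
        ← Matrix.fromBlocks_one, Matrix.fromBlocks_smul, Matrix.fromBlocks_multiply]

/-- If `X*A - B*X = C`, `H = [[A, 0], [C, B]]`, and a polynomial `q` satisfies
`q(A) = I` and `q(B) = -I`, then `q(H) = [[I, 0], [2X, -I]]`; in particular the lower-left block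
of `q(H)` is `2X`. -/
theorem aeval_block_sylvester_sign {n m : ℕ}
    (A : Matrix (Fin n) (Fin n) ℂ) (B : Matrix (Fin m) (Fin m) ℂ)
    (C X : Matrix (Fin m) (Fin n) ℂ)
    (hX : X * A - B * X = C)
    (q : Polynomial ℂ)
    (hqA : Polynomial.aeval A q = 1)
    (hqB : Polynomial.aeval B q = -1) :
    Polynomial.aeval (Matrix.fromBlocks A 0 C B) q =
        Matrix.fromBlocks 1 0 ((2 : ℂ) • X) (-1) ∧
      (Polynomial.aeval (Matrix.fromBlocks A 0 C B) q).toBlocks₂₁ = (2 : ℂ) • X := by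
  set S : Matrix (Fin n ⊕ Fin m) (Fin n ⊕ Fin m) ℂ := Matrix.fromBlocks 1 0 X 1 with hS
  set S' : Matrix (Fin n ⊕ Fin m) (Fin n ⊕ Fin m) ℂ := Matrix.fromBlocks 1 0 (-X) 1 with hS'
  have h1 : S * S' = 1 := by
    simp [hS, hS', Matrix.fromBlocks_multiply, Matrix.fromBlocks_one]
  have h2 : S' * S = 1 := by
    simp [hS, hS', Matrix.fromBlocks_multiply, Matrix.fromBlocks_one]
  have hH : Matrix.fromBlocks A 0 C B = S * Matrix.fromBlocks A 0 0 B * S' := by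
    rw [hS, hS', Matrix.fromBlocks_multiply, Matrix.fromBlocks_multiply]
    simp [← hX, sub_eq_add_neg]
  have key : Polynomial.aeval (Matrix.fromBlocks A 0 C B) q =
      Matrix.fromBlocks 1 0 ((2 : ℂ) • X) (-1) := by
    rw [hH, conj_aeval S S' _ h1 h2, diag_aeval, hqA, hqB, hS, hS',
      Matrix.fromBlocks_multiply, Matrix.fromBlocks_multiply]
    simp [two_smul]
  exact ⟨key, by rw [key, Matrix.toBlocks_fromBlocks₂₁]⟩
end

section
/- Let (p_j)_{j≥0} ⊂ ℂ[x] satisfy the three-term recurrence with coefficients (a_k), (b_k) (all b_k ≠ 0), let A ∈ ℂ^{n×n}, B ∈ ℂ^{m×m}, C ∈ ℂ^{m×n}, and let H = [[A, 0], [C, B]]. Define matrices G_j ∈ ℂ^{m×n} by G_0 = −C, G_1 = (1/b_0)(G_0·A + (a_0 + 1)·C), and G_j = (1/b_{j−1})(G_{j−1}·A + p_{j−1}(B)·C − a_{j−1}·G_{j−1} − b_{j−2}·G_{j−2}) for j ≥ 2. Then for every j ≥ 0, the lower-left m×n block of p_j(H) equals C·p_j(A) + G_j. -/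
open Polynomial Matrix

section helpers

variable {n m : ℕ}

lemma tb21_add (M N : Matrix (Fin n ⊕ Fin m) (Fin n ⊕ Fin m) ℂ) :
    (M + N).toBlocks₂₁ = M.toBlocks₂₁ + N.toBlocks₂₁ := rfl

lemma tb21_sub (M N : Matrix (Fin n ⊕ Fin m) (Fin n ⊕ Fin m) ℂ) :
    (M - N).toBlocks₂₁ = M.toBlocks₂₁ - N.toBlocks₂₁ := rfl

lemma tb21_smul (c : ℂ) (M : Matrix (Fin n ⊕ Fin m) (Fin n ⊕ Fin m) ℂ) :
    (c • M).toBlocks₂₁ = c • M.toBlocks₂₁ := rfl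

lemma tb21_one : (1 : Matrix (Fin n ⊕ Fin m) (Fin n ⊕ Fin m) ℂ).toBlocks₂₁ = 0 := by
  rw [← Matrix.fromBlocks_one, Matrix.toBlocks_fromBlocks₂₁]

lemma block_form (A : Matrix (Fin n) (Fin n) ℂ) (B : Matrix (Fin m) (Fin m) ℂ)
    (C : Matrix (Fin m) (Fin n) ℂ) (q : Polynomial ℂ) :
    Polynomial.aeval (Matrix.fromBlocks A 0 C B) q =
      Matrix.fromBlocks (Polynomial.aeval A q) 0
        ((Polynomial.aeval (Matrix.fromBlocks A 0 C B) q).toBlocks₂₁)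
        (Polynomial.aeval B q) := by
  obtain ⟨X, hX⟩ : ∃ X, Polynomial.aeval (Matrix.fromBlocks A 0 C B) q =
      Matrix.fromBlocks (Polynomial.aeval A q) 0 X (Polynomial.aeval B q) := by
    induction q using Polynomial.induction_on with
    | C c =>
        refine ⟨0, ?_⟩
        simp only [Polynomial.aeval_C, Algebra.algebraMap_eq_smul_one,
          ← Matrix.fromBlocks_one, Matrix.fromBlocks_smul]
        simp
    | add f g hf hg =>
        obtain ⟨X, hX⟩ := hf
        obtain ⟨Y, hY⟩ := hg
        exact ⟨X + Y, by simp [hX, hY, Matrix.fromBlocks_add]⟩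
    | monomial k c ih =>
        obtain ⟨X, hX⟩ := ih
        refine ⟨X * A + (Polynomial.aeval B (Polynomial.C c * Polynomial.X ^ k)) * C, ?_⟩
        have : (Polynomial.C c * Polynomial.X ^ (k + 1)) =
            (Polynomial.C c * Polynomial.X ^ k) * Polynomial.X := by ring
        rw [this]
        simp only [_root_.map_mul, Polynomial.aeval_X, hX, Matrix.fromBlocks_multiply]
        simp
  rw [hX, Matrix.toBlocks_fromBlocks₂₁]

end helpers

/-- Let `(p_j)` satisfy the three-term recurrence with coefficients `(a_k)`,
`(b_k)` (all `b_k ≠ 0`), and let `H = [[A, 0], [C, B]]`.  Define `G_0 = -C`,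
`G_1 = (1/b_0)(G_0*A + (a_0+1)*C)`, and for `j ≥ 2`,
`G_j = (1/b_{j-1})(G_{j-1}*A + p_{j-1}(B)*C - a_{j-1}*G_{j-1} - b_{j-2}*G_{j-2})`.
Then the lower-left `m×n` block of `p_j(H)` equals `C*p_j(A) + G_j` for every `j`. -/
theorem lower_left_block_recurrence {n m : ℕ}
    (a b : ℕ → ℂ) (hb : ∀ k, b k ≠ 0)
    (p : ℕ → Polynomial ℂ)
    (hp0 : p 0 = 1)
    (hp1 : Polynomial.X * p 0 = Polynomial.C (a 0) * p 0 + Polynomial.C (b 0) * p 1)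
    (hprec : ∀ k, 1 ≤ k →
      Polynomial.X * p k =
        Polynomial.C (b (k - 1)) * p (k - 1) + Polynomial.C (a k) * p k +
          Polynomial.C (b k) * p (k + 1))
    (A : Matrix (Fin n) (Fin n) ℂ) (B : Matrix (Fin m) (Fin m) ℂ)
    (C : Matrix (Fin m) (Fin n) ℂ)
    (G : ℕ → Matrix (Fin m) (Fin n) ℂ)
    (hG0 : G 0 = -C)
    (hG1 : G 1 = (b 0)⁻¹ • (G 0 * A + (a 0 + 1) • C))
    (hGrec : ∀ j, 2 ≤ j →
      G j = (b (j - 1))⁻¹ •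
        (G (j - 1) * A + Polynomial.aeval B (p (j - 1)) * C - a (j - 1) • G (j - 1)
          - b (j - 2) • G (j - 2))) :
    ∀ j, (Polynomial.aeval (Matrix.fromBlocks A 0 C B) (p j)).toBlocks₂₁ =
      C * Polynomial.aeval A (p j) + G j := by
  set H := Matrix.fromBlocks A 0 C B with hH
  -- abbreviation for the statement
  suffices h : ∀ j, ((Polynomial.aeval H (p j)).toBlocks₂₁ =
      C * Polynomial.aeval A (p j) + G j) ∧
      ((Polynomial.aeval H (p (j+1))).toBlocks₂₁ =
        C * Polynomial.aeval A (p (j+1)) + G (j+1)) by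
    intro j; exact (h j).1
  -- base case j = 1 ingredients
  have e1 : (b 0) • p 1 = Polynomial.X - Polynomial.C (a 0) := by
    simp only [Polynomial.smul_eq_C_mul]
    have := hp1
    rw [hp0] at this
    linear_combination -this
  have base1 : (Polynomial.aeval H (p 1)).toBlocks₂₁ =
      C * Polynomial.aeval A (p 1) + G 1 := by
    have hA1 := congrArg (Polynomial.aeval A) e1
    have hH1 := congrArg (Polynomial.aeval H) e1
    simp only [_root_.map_smul, map_sub, Polynomial.aeval_X, Polynomial.aeval_C,
      Algebra.algebraMap_eq_smul_one] at hA1 hH1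
    have hLH := congrArg Matrix.toBlocks₂₁ hH1
    rw [tb21_smul, tb21_sub, tb21_smul, tb21_one, hH, Matrix.toBlocks_fromBlocks₂₁] at hLH
    -- hLH : b 0 • (aeval H (p 1)).toBlocks₂₁ = C - a 0 • 0
    have hb0 := hb 0
    have hp1A : Polynomial.aeval A (p 1) = (b 0)⁻¹ • (A - a 0 • 1) := by
      rw [← hA1, smul_smul, inv_mul_cancel₀ hb0, one_smul]
    have hL : (Polynomial.aeval H (p 1)).toBlocks₂₁ = (b 0)⁻¹ • C := by
      have := congrArg (fun M => (b 0)⁻¹ • M) hLH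
      simpa [smul_smul, inv_mul_cancel₀ hb0] using this
    rw [hL, hp1A, hG1, hG0]
    rw [Matrix.mul_smul]
    rw [← smul_add]
    congr 1
    simp only [Matrix.mul_sub, Matrix.mul_smul, Matrix.mul_one, Matrix.neg_mul]
    module
  intro j
  induction j with
  | zero =>
      refine ⟨?_, base1⟩
      rw [hp0]
      simp [tb21_one, hG0]
  | succ j ih =>
      refine ⟨ih.2, ?_⟩
      -- recurrence at k = j+1
      have e := hprec (j+1) (by omega)
      simp only [Nat.add_sub_cancel] at e
      have e2 : (b (j+1)) • p (j+2) =
          p (j+1) * Polynomial.X - (b j) • p j - (a (j+1)) • p (j+1) := by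
        simp only [Polynomial.smul_eq_C_mul]
        linear_combination -e
      have hAe := congrArg (Polynomial.aeval A) e2
      have hHe := congrArg (Polynomial.aeval H) e2
      simp only [_root_.map_smul, map_sub, _root_.map_mul, Polynomial.aeval_X] at hAe hHe
      have hLH := congrArg Matrix.toBlocks₂₁ hHe
      rw [tb21_smul, tb21_sub, tb21_sub, tb21_smul, tb21_smul] at hLH
      have hmul : (Polynomial.aeval H (p (j+1)) * H).toBlocks₂₁ =
          (Polynomial.aeval H (p (j+1))).toBlocks₂₁ * A +
            Polynomial.aeval B (p (j+1)) * C := by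
        conv_lhs => rw [block_form A B C (p (j+1)), hH, Matrix.fromBlocks_multiply]
        simp [Matrix.toBlocks_fromBlocks₂₁]
        rw [hH]
      rw [hmul, ih.1, ih.2] at hLH
      -- hLH : b(j+1) • L(j+2) = (C*pA(j+1)+G(j+1))*A + pB(j+1)*C - b j • (C*pA j + G j)
      --        - a(j+1) • (C*pA(j+1)+G(j+1))
      have hGe := hGrec (j+2) (by omega)
      simp only [show j+2-1 = j+1 from rfl, show j+2-2 = j from rfl] at hGe
      have hbj := hb (j+1)
      show (Polynomial.aeval H (p (j+2))).toBlocks₂₁ = C * Polynomial.aeval A (p (j+2)) + G (j+2)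
      have hsc : b (j+1) • G (j+2) = G (j+1) * A + Polynomial.aeval B (p (j+1)) * C
          - a (j+1) • G (j+1) - b j • G j := by
        rw [hGe, smul_smul, mul_inv_cancel₀ hbj, one_smul]
      have key : (b (j+1)) • ((Polynomial.aeval H (p (j+2))).toBlocks₂₁) =
          (b (j+1)) • (C * Polynomial.aeval A (p (j+2)) + G (j+2)) := by
        have rhs : (b (j+1)) • (C * Polynomial.aeval A (p (j+2)) + G (j+2)) =
            C * (Polynomial.aeval A (p (j+1)) * A - b j • Polynomial.aeval A (p j)
              - a (j+1) • Polynomial.aeval A (p (j+1))) +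
            (G (j+1) * A + Polynomial.aeval B (p (j+1)) * C
              - a (j+1) • G (j+1) - b j • G j) := by
          rw [smul_add, hsc, ← Matrix.mul_smul, hAe]
        rw [rhs, hLH]
        simp only [Matrix.mul_sub, Matrix.mul_add, Matrix.add_mul, Matrix.sub_mul,
          Matrix.mul_smul, Matrix.smul_mul, smul_add, smul_sub, Matrix.neg_mul, Matrix.mul_assoc]
        module
      have := congrArg (fun M => (b (j+1))⁻¹ • M) key
      simpa [smul_smul, inv_mul_cancel₀ hbj] using this
end

section
/- Let A ∈ ℂ^{n×n} and B ∈ ℂ^{m×m} be diagonalizable with σ(A) ∩ σ(B) = ∅, let X ∈ ℂ^{m×n} solve XA − BX = C, and let H = [[A, 0], [C, B]]. Suppose (p_j)_{j≥0} ⊂ ℂ[x] and (α_j)_{j≥0} ⊂ ℂ satisfy Σ_{j≥0} |α_j| · max_{λ ∈ σ(A) ∪ σ(B)} |p_j(λ)| < ∞, Σ_{j≥0} α_j p_j(λ) = 1 for every λ ∈ σ(A), and Σ_{j≥0} α_j p_j(λ) = −1 for every λ ∈ σ(B). Then the matrix series Σ_{j≥0} α_j p_j(H) converges in ℂ^{(n+m)×(n+m)}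 with sum [[I_n, 0], [2X, −I_m]]; in particular X = (1/2)·Σ_{j≥0} α_j · (lower-left m×n block of p_j(H)). -/
open Matrix Polynomial

/-- Conjugation by a unit as an algebra homomorphism. -/
private noncomputable def conjAlgHom {R A : Type*} [CommSemiring R] [Ring A] [Algebra R A]
    (u : Aˣ) : A →ₐ[R] A where
  toFun x := u * x * ↑u⁻¹
  map_one' := by simp
  map_mul' x y := by simp [mul_assoc]
  map_zero' := by simp
  map_add' x y := by simp [mul_add, add_mul]
  commutes' r := by
    show (u : A) * algebraMap R A r * ↑u⁻¹ = algebraMap R A r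
    rw [← Algebra.commutes r (u : A), mul_assoc, Units.mul_inv, mul_one]

private lemma aeval_unit_conj {R A : Type*} [CommSemiring R] [Ring A] [Algebra R A]
    (u : Aˣ) (a : A) (q : R[X]) :
    aeval ((u : A) * a * (↑u⁻¹ : A)) q = (u : A) * aeval a q * (↑u⁻¹ : A) :=
  aeval_algHom_apply (conjAlgHom u) a q

/-- Let `A`, `B` be diagonalizable with disjoint spectra, let `X` solve
`X*A - B*X = C`, and let `H = [[A, 0], [C, B]]`.  If `(p_j) ⊂ ℂ[x]` and `(α_j) ⊂ ℂ` satisfy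
`Σ_j |α_j| · max_{λ ∈ σ(A) ∪ σ(B)} |p_j(λ)| < ∞`, `Σ_j α_j p_j(λ) = 1` on `σ(A)` and
`Σ_j α_j p_j(λ) = -1` on `σ(B)`, then `Σ_j α_j p_j(H)` converges to `[[I, 0], [2X, -I]]`;
in particular `X = (1/2) Σ_j α_j · (lower-left block of p_j(H))`. -/
theorem hasSum_sign_block_sylvester {n m : ℕ}
    (A : Matrix (Fin n) (Fin n) ℂ) (B : Matrix (Fin m) (Fin m) ℂ)
    (C X : Matrix (Fin m) (Fin n) ℂ)
    (VA ΛA : Matrix (Fin n) (Fin n) ℂ)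
    (hVA : IsUnit VA.det) (hΛA : ΛA.IsDiag) (hA : A = VA * ΛA * VA⁻¹)
    (VB ΛB : Matrix (Fin m) (Fin m) ℂ)
    (hVB : IsUnit VB.det) (hΛB : ΛB.IsDiag) (hB : B = VB * ΛB * VB⁻¹)
    (hdisj : spectrum ℂ A ∩ spectrum ℂ B = ∅)
    (hX : X * A - B * X = C)
    (p : ℕ → Polynomial ℂ) (α : ℕ → ℂ)
    (habs : Summable (fun j => ‖α j‖ *
      sSup ((fun μ => ‖(p j).eval μ‖) '' (spectrum ℂ A ∪ spectrum ℂ B))))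
    (hone : ∀ μ ∈ spectrum ℂ A, HasSum (fun j => α j * (p j).eval μ) 1)
    (hneg : ∀ μ ∈ spectrum ℂ B, HasSum (fun j => α j * (p j).eval μ) (-1)) :
    HasSum (fun j => α j • Polynomial.aeval (Matrix.fromBlocks A 0 C B) (p j))
        (Matrix.fromBlocks 1 0 ((2 : ℂ) • X) (-1)) ∧
      X = (2 : ℂ)⁻¹ •
        ∑' j, α j • (Polynomial.aeval (Matrix.fromBlocks A 0 C B) (p j)).toBlocks₂₁ := by
  classical
  set H : Matrix (Fin n ⊕ Fin m) (Fin n ⊕ Fin m) ℂ := Matrix.fromBlocks A 0 C B with hH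
  have hVA1 : VA * VA⁻¹ = 1 := Matrix.mul_nonsing_inv VA hVA
  have hVA2 : VA⁻¹ * VA = 1 := Matrix.nonsing_inv_mul VA hVA
  have hVB1 : VB * VB⁻¹ = 1 := Matrix.mul_nonsing_inv VB hVB
  have hVB2 : VB⁻¹ * VB = 1 := Matrix.nonsing_inv_mul VB hVB
  set W : Matrix (Fin n ⊕ Fin m) (Fin n ⊕ Fin m) ℂ := Matrix.fromBlocks VA 0 (X * VA) VB with hW
  set Wi : Matrix (Fin n ⊕ Fin m) (Fin n ⊕ Fin m) ℂ :=
    Matrix.fromBlocks VA⁻¹ 0 (-(VB⁻¹ * X)) VB⁻¹ with hWi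
  have e1 : X * VA * VA⁻¹ = X := by rw [Matrix.mul_assoc, hVA1, Matrix.mul_one]
  have e2 : VB * (VB⁻¹ * X) = X := by rw [← Matrix.mul_assoc, hVB1, Matrix.one_mul]
  have e3 : VB⁻¹ * X * VA = VB⁻¹ * (X * VA) := Matrix.mul_assoc _ _ _
  have hWWi : W * Wi = 1 := by
    rw [hW, hWi, Matrix.fromBlocks_multiply, ← Matrix.fromBlocks_one]
    simp [hVA1, hVB1, e1, e2]
  have hWiW : Wi * W = 1 := by
    rw [hW, hWi, Matrix.fromBlocks_multiply, ← Matrix.fromBlocks_one]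
    simp [hVA2, hVB2, e3]
  set d : Fin n ⊕ Fin m → ℂ := Sum.elim ΛA.diag ΛB.diag with hd
  have hDdiag : (Matrix.fromBlocks ΛA 0 0 ΛB : Matrix (Fin n ⊕ Fin m) (Fin n ⊕ Fin m) ℂ)
      = Matrix.diagonal d := by
    rw [← hΛA.diagonal_diag, ← hΛB.diagonal_diag, Matrix.fromBlocks_diagonal]
  have hAVA : A * VA = VA * ΛA := by
    rw [hA, Matrix.mul_assoc, hVA2, Matrix.mul_one]
  have hBVB : B * VB = VB * ΛB := by
    rw [hB, Matrix.mul_assoc, hVB2, Matrix.mul_one]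
  have hXA : C + B * X = X * A := by rw [← hX, sub_add_cancel]
  have e21 : C * VA + B * (X * VA) = X * VA * ΛA := by
    rw [← Matrix.mul_assoc B, ← Matrix.add_mul, hXA, Matrix.mul_assoc, hAVA, ← Matrix.mul_assoc]
  have hHW : H * W = W * Matrix.diagonal d := by
    rw [← hDdiag, hH, hW, Matrix.fromBlocks_multiply, Matrix.fromBlocks_multiply]
    simp [hAVA, hBVB, e21]
  have hHconj : H = W * Matrix.diagonal d * Wi := by
    calc H = H * (W * Wi) := by rw [hWWi, Matrix.mul_one]
    _ = H * W * Wi := by rw [Matrix.mul_assoc]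
    _ = W * Matrix.diagonal d * Wi := by rw [hHW]
  set w : (Matrix (Fin n ⊕ Fin m) (Fin n ⊕ Fin m) ℂ)ˣ := ⟨W, Wi, hWWi, hWiW⟩ with hw
  have haevalH : ∀ q : ℂ[X], aeval H q = W * aeval (Matrix.diagonal d) q * Wi := by
    intro q
    rw [hHconj]
    exact aeval_unit_conj w (Matrix.diagonal d) q
  -- spectrum facts
  set uA : (Matrix (Fin n) (Fin n) ℂ)ˣ := ⟨VA, VA⁻¹, hVA1, hVA2⟩ with huA
  set uB : (Matrix (Fin m) (Fin m) ℂ)ˣ := ⟨VB, VB⁻¹, hVB1, hVB2⟩ with huB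
  have hspecA : spectrum ℂ ΛA = spectrum ℂ A := by
    rw [hA]
    exact (spectrum.units_conjugate (u := uA)).symm
  have hspecB : spectrum ℂ ΛB = spectrum ℂ B := by
    rw [hB]
    exact (spectrum.units_conjugate (u := uB)).symm
  have hmem : ∀ {k : ℕ} (M : Matrix (Fin k) (Fin k) ℂ) (_ : M.IsDiag) (i : Fin k),
      M.diag i ∈ spectrum ℂ M := by
    intro k M hM i
    rw [spectrum.mem_iff]
    intro hu
    rw [Matrix.isUnit_iff_isUnit_det] at hu
    have hdet : ((algebraMap ℂ (Matrix (Fin k) (Fin k) ℂ)) (M.diag i) - M).det = 0 := by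
      conv_lhs => rw [show M = Matrix.diagonal M.diag from hM.diagonal_diag.symm]
      rw [Matrix.algebraMap_eq_diagonal, Matrix.diagonal_sub, Matrix.det_diagonal]
      exact Finset.prod_eq_zero (Finset.mem_univ i) (by simp)
    rw [hdet] at hu
    exact not_isUnit_zero hu
  have hmemA : ∀ i, ΛA.diag i ∈ spectrum ℂ A := fun i => hspecA ▸ hmem ΛA hΛA i
  have hmemB : ∀ i, ΛB.diag i ∈ spectrum ℂ B := fun i => hspecB ▸ hmem ΛB hΛB i
  -- componentwise hasSum
  set t : Fin n ⊕ Fin m → ℂ := Sum.elim (fun _ => (1 : ℂ)) (fun _ => (-1 : ℂ)) with ht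
  have hsum_pi : HasSum (fun j => fun i => α j * (p j).eval (d i)) t := by
    rw [Pi.hasSum]
    rintro (i | i)
    · exact hone _ (hmemA i)
    · exact hneg _ (hmemB i)
  -- diagonal continuous linear map
  let dL : ((Fin n ⊕ Fin m) → ℂ) →L[ℂ] Matrix (Fin n ⊕ Fin m) (Fin n ⊕ Fin m) ℂ :=
    LinearMap.toContinuousLinearMap (Matrix.diagonalAlgHom ℂ).toLinearMap
  have hdL : ∀ v, dL v = Matrix.diagonal v := fun v => rfl
  have h2 := hsum_pi.mapL dL
  have haevalD : ∀ q : ℂ[X],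
      aeval (Matrix.diagonal d) q = Matrix.diagonal (fun i => q.eval (d i)) := by
    intro q
    have h := aeval_algHom_apply (Matrix.diagonalAlgHom ℂ) d q
    simp only [Matrix.diagonalAlgHom_apply] at h
    rw [h]
    have hv : (aeval d) q = fun i => q.eval (d i) := by
      funext i
      rw [← coe_aeval_eq_eval]
      exact (aeval_algHom_apply (Pi.evalAlgHom ℂ (fun _ => ℂ) i) d q).symm
    rw [hv]
  have hterm : ∀ j, dL (fun i => α j * (p j).eval (d i))
      = α j • aeval (Matrix.diagonal d) (p j) := by
    intro j
    rw [hdL, haevalD, ← Matrix.diagonal_smul]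
    congr 1
  -- conjugation continuous linear map
  let cL : Matrix (Fin n ⊕ Fin m) (Fin n ⊕ Fin m) ℂ →L[ℂ]
      Matrix (Fin n ⊕ Fin m) (Fin n ⊕ Fin m) ℂ :=
    LinearMap.toContinuousLinearMap ((LinearMap.mulRight ℂ Wi).comp (LinearMap.mulLeft ℂ W))
  have hcL : ∀ M, cL M = W * M * Wi := fun M => rfl
  have h3 := h2.mapL cL
  have hfun : (fun j => cL (dL fun i => α j * (p j).eval (d i)))
      = fun j => α j • aeval H (p j) := by
    funext j
    rw [hterm, hcL, Matrix.mul_smul, Matrix.smul_mul, ← haevalH]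
  have hval : cL (dL t) = Matrix.fromBlocks 1 0 ((2 : ℂ) • X) (-1) := by
    rw [hcL, hdL]
    have htb : Matrix.diagonal t
        = Matrix.fromBlocks (1 : Matrix (Fin n) (Fin n) ℂ) 0 0 (-1 : Matrix (Fin m) (Fin m) ℂ) := by
      rw [ht, ← Matrix.fromBlocks_diagonal,
        show (Matrix.diagonal fun _ : Fin n => (1 : ℂ)) = 1 from Matrix.diagonal_one,
        show (Matrix.diagonal fun _ : Fin m => (-1 : ℂ)) = -1 by
          rw [show (Matrix.diagonal fun _ : Fin m => (-1 : ℂ))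
              = -Matrix.diagonal fun _ : Fin m => (1 : ℂ) from (Matrix.diagonal_neg _).symm,
            Matrix.diagonal_one]]
    have hP : W * Matrix.fromBlocks (1 : Matrix (Fin n) (Fin n) ℂ) 0 0
        (-1 : Matrix (Fin m) (Fin m) ℂ) = Matrix.fromBlocks VA 0 (X * VA) (-VB) := by
      rw [hW, Matrix.fromBlocks_multiply]
      simp
    rw [htb, hP, hWi, Matrix.fromBlocks_multiply]
    simp [hVA1, hVB1, e1, e2, two_smul]
  rw [hfun, hval] at h3
  refine ⟨h3, ?_⟩
  -- lower-left block
  let bL : Matrix (Fin n ⊕ Fin m) (Fin n ⊕ Fin m) ℂ →L[ℂ] Matrix (Fin m) (Fin n) ℂ :=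
    LinearMap.toContinuousLinearMap
      { toFun := Matrix.toBlocks₂₁, map_add' := fun x y => rfl, map_smul' := fun c x => rfl }
  have h4 := h3.mapL bL
  have hbL : ∀ M, bL M = M.toBlocks₂₁ := fun M => rfl
  have hfun2 : (fun j => bL (α j • aeval H (p j)))
      = fun j => α j • (aeval H (p j)).toBlocks₂₁ := by
    funext j; rw [bL.map_smul, hbL]
  have hval2 : bL (Matrix.fromBlocks 1 0 ((2:ℂ) • X) (-1)) = (2:ℂ) • X := by
    rw [hbL, Matrix.toBlocks_fromBlocks₂₁]
  rw [hfun2, hval2] at h4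
  rw [h4.tsum_eq, smul_smul]
  norm_num
end

section
/- Let M ∈ ℂ^{ℓ×ℓ} be diagonalizable, M = VΛV^{−1}, let (p_j)_{j≥0} ⊂ ℂ[x], (α_j)_{j≥0} ⊂ ℂ, and suppose there are constants C, M₀, c > 0 and ρ > τ > 0 with ρ > 1 such that |α_j| ≤ C·M₀·ρ^{−j} for all j and |p_j(λ)| ≤ c·τ^{j} for all j and all λ ∈ σ(M). Then the series F = Σ_{j≥0} α_j p_j(M) converges in ℂ^{ℓ×ℓ}, and for every k ≥ 0, ‖F − Σ_{j=0}^{k−1} α_j p_j(M)‖₂ ≤ c·C·M₀·‖V‖₂·‖V^{−1}‖₂·(τ/ρ)^{k}/(1 − τ/ρ). -/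
/-- The spectral norm of a complex matrix: the operator norm of the induced linear map between
Euclidean spaces. -/
noncomputable def specNorm {m n : ℕ} (M : Matrix (Fin m) (Fin n) ℂ) : ℝ :=
  ‖LinearMap.toContinuousLinearMap (Matrix.toEuclideanLin M)‖

lemma aux_aeval_conj {A : Type*} [Ring A] [Algebra ℂ A] (u : Aˣ) (a : A) (q : Polynomial ℂ) :
    Polynomial.aeval ((u : A) * a * ↑u⁻¹) q = ↑u * Polynomial.aeval a q * ↑u⁻¹ := by
  induction q using Polynomial.induction_on' with
  | add f g hf hg => simp [map_add, hf, hg, mul_add, add_mul]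
  | monomial n b =>
    rw [Polynomial.aeval_monomial, Polynomial.aeval_monomial, Units.conj_pow]
    simp only [← mul_assoc]
    rw [Algebra.commutes]

lemma aux_aeval_diagonal {n : ℕ} (d : Fin n → ℂ) (q : Polynomial ℂ) :
    Polynomial.aeval (Matrix.diagonal d) q
      = Matrix.diagonal (fun i => q.eval (d i)) := by
  have h := Polynomial.aeval_algHom_apply (Matrix.diagonalAlgHom (n := Fin n) (α := ℂ) ℂ) d q
  simp only [Matrix.diagonalAlgHom_apply] at h
  have h2 : (Polynomial.aeval d q) = fun i => Polynomial.eval (d i) q := by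
    funext i
    rw [show (Polynomial.aeval d q) i = Polynomial.aeval (d i) q from
      (Polynomial.aeval_algHom_apply (Pi.evalAlgHom ℂ (fun _ => ℂ) i) d q).symm]
    rw [← Polynomial.coe_aeval_eq_eval]
  rw [h, h2]

lemma aux_norm_diag {n : ℕ} (d : Fin n → ℂ) (m : ℝ) (hm : 0 ≤ m) (h : ∀ i, ‖d i‖ ≤ m) :
    ‖Matrix.toEuclideanCLM (𝕜 := ℂ) (Matrix.diagonal d)‖ ≤ m := by
  refine ContinuousLinearMap.opNorm_le_bound _ hm fun x => ?_
  have hx : ∀ i, (Matrix.toEuclideanCLM (𝕜 := ℂ) (Matrix.diagonal d) x) i = d i * x i := by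
    intro i
    show (WithLp.ofLp (Matrix.toEuclideanCLM (𝕜 := ℂ) (Matrix.diagonal d) x)) i
      = d i * x i
    rw [Matrix.ofLp_toEuclideanCLM, Matrix.mulVec_diagonal]
  rw [EuclideanSpace.norm_eq, EuclideanSpace.norm_eq, ← Real.sqrt_sq hm,
    ← Real.sqrt_mul (sq_nonneg m)]
  apply Real.sqrt_le_sqrt
  rw [Finset.mul_sum]
  apply Finset.sum_le_sum
  intro i _
  rw [hx i, norm_mul, mul_pow]
  exact mul_le_mul_of_nonneg_right (pow_le_pow_left₀ (norm_nonneg _) (h i) 2) (sq_nonneg _)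

/-- Let `M = V Λ V⁻¹` be diagonalizable.  If `|α_j| ≤ C·M₀·ρ^{-j}` and
`|p_j(λ)| ≤ c·τ^j` for all `j` and all `λ ∈ σ(M)`, where `ρ > τ > 0` and `ρ > 1`, then
`F = Σ_j α_j p_j(M)` converges and for every `k`,
`‖F - Σ_{j<k} α_j p_j(M)‖₂ ≤ c·C·M₀·‖V‖₂·‖V⁻¹‖₂·(τ/ρ)^k/(1 - τ/ρ)`. -/
theorem akhiezer_iteration_conv_rate_worst_offender {ℓ : ℕ}
    (M V Λ : Matrix (Fin ℓ) (Fin ℓ) ℂ)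
    (hV : IsUnit V.det) (hΛ : Λ.IsDiag) (hM : M = V * Λ * V⁻¹)
    (p : ℕ → Polynomial ℂ) (α : ℕ → ℂ)
    (K M₀ c ρ τ : ℝ) (hK : 0 < K) (hM₀ : 0 < M₀) (hc : 0 < c)
    (hτ : 0 < τ) (hτρ : τ < ρ) (hρ : 1 < ρ)
    (hα : ∀ j, ‖α j‖ ≤ K * M₀ * ρ⁻¹ ^ j)
    (hp : ∀ j, ∀ μ ∈ spectrum ℂ M, ‖(p j).eval μ‖ ≤ c * τ ^ j) :
    Summable (fun j => α j • Polynomial.aeval M (p j)) ∧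
      ∀ k, specNorm ((∑' j, α j • Polynomial.aeval M (p j)) -
            ∑ j ∈ Finset.range k, α j • Polynomial.aeval M (p j)) ≤
          c * K * M₀ * specNorm V * specNorm V⁻¹ * (τ / ρ) ^ k / (1 - τ / ρ) := by
  classical
  have hρ0 : (0:ℝ) < ρ := lt_trans hτ hτρ
  set r : ℝ := τ / ρ with hr
  have hr0 : 0 ≤ r := le_of_lt (div_pos hτ hρ0)
  have hr1 : r < 1 := (div_lt_one hρ0).mpr hτρ
  -- the continuous algebra isomorphism with continuous linear endomorphisms
  obtain ⟨u, hu⟩ := (Matrix.isUnit_iff_isUnit_det V).mpr hV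
  have huinv : ((u⁻¹ : _ˣ) : Matrix (Fin ℓ) (Fin ℓ) ℂ) = V⁻¹ := by
    rw [Matrix.coe_units_inv, hu]
  let eL : Matrix (Fin ℓ) (Fin ℓ) ℂ ≃ₗ[ℂ]
      (EuclideanSpace ℂ (Fin ℓ) →L[ℂ] EuclideanSpace ℂ (Fin ℓ)) :=
    Matrix.toEuclideanLin.trans LinearMap.toContinuousLinearMap
  let e : Matrix (Fin ℓ) (Fin ℓ) ℂ ≃L[ℂ]
      (EuclideanSpace ℂ (Fin ℓ) →L[ℂ] EuclideanSpace ℂ (Fin ℓ)) :=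
    eL.toContinuousLinearEquiv
  have he : ∀ A, e A = Matrix.toEuclideanCLM (𝕜 := ℂ) A := fun A => rfl
  have hsn : ∀ A, specNorm A = ‖e A‖ := fun A => rfl
  have hmul : ∀ A B : Matrix (Fin ℓ) (Fin ℓ) ℂ, e (A * B) = e A * e B := by
    intro A B
    rw [he, he, he, map_mul]
  -- decomposition of the polynomial evaluations
  have hconj : ∀ j, Polynomial.aeval M (p j) = V * Polynomial.aeval Λ (p j) * V⁻¹ := by
    intro j
    rw [hM, ← huinv, ← hu, aux_aeval_conj, hu, huinv]
  have hspecM : spectrum ℂ M = Set.range Λ.diag := by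
    rw [hM, ← huinv, ← hu, spectrum.units_conjugate, ← hΛ.diagonal_diag,
      spectrum_diagonal, Matrix.diag_diagonal]
  set B : ℝ := c * K * M₀ * specNorm V * specNorm V⁻¹ with hB
  have hcτ : ∀ j, (0:ℝ) ≤ c * τ ^ j := fun j => by positivity
  have hdiagnorm : ∀ j, ‖e (Polynomial.aeval Λ (p j))‖ ≤ c * τ ^ j := by
    intro j
    rw [he, ← hΛ.diagonal_diag, aux_aeval_diagonal]
    refine aux_norm_diag _ _ (hcτ j) fun i => ?_
    exact hp j _ (hspecM ▸ Set.mem_range_self i)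
  have key : ∀ j, ‖e (α j • Polynomial.aeval M (p j))‖ ≤ B * r ^ j := by
    intro j
    rw [map_smul, norm_smul (α j) (e (Polynomial.aeval M (p j))), hconj j, hmul, hmul]
    have h1 : ‖e V * e (Polynomial.aeval Λ (p j)) * e V⁻¹‖ ≤
        ‖e V‖ * (c * τ ^ j) * ‖e V⁻¹‖ := by
      refine le_trans (norm_mul_le _ _) ?_
      refine mul_le_mul (le_trans (norm_mul_le _ _) ?_) le_rfl (norm_nonneg _) (by positivity)
      exact mul_le_mul_of_nonneg_left (hdiagnorm j) (norm_nonneg _)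
    refine le_trans (mul_le_mul (hα j) h1 (norm_nonneg _) (by positivity)) (le_of_eq ?_)
    rw [hB, hsn V, hsn V⁻¹, hr]
    rw [div_pow, div_eq_mul_inv, ← inv_pow]
    ring
  have hBsum : Summable (fun j => B * r ^ j) :=
    (summable_geometric_of_lt_one hr0 hr1).mul_left B
  have hesum : Summable (fun j => e (α j • Polynomial.aeval M (p j))) :=
    Summable.of_norm_bounded hBsum key
  have hsum : Summable (fun j => α j • Polynomial.aeval M (p j)) := by
    let φ : (EuclideanSpace ℂ (Fin ℓ) →L[ℂ] EuclideanSpace ℂ (Fin ℓ)) →L[ℂ]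
        Matrix (Fin ℓ) (Fin ℓ) ℂ := (e.symm : _ →L[ℂ] _)
    have h := hesum.map φ φ.continuous
    have heq : (⇑φ ∘ fun j => e (α j • Polynomial.aeval M (p j)))
        = fun j => α j • Polynomial.aeval M (p j) := by
      funext j
      simp [φ]
    rwa [heq] at h
  refine ⟨hsum, fun k => ?_⟩
  have h1 : e (∑' j, α j • Polynomial.aeval M (p j))
      = ∑' j, e (α j • Polynomial.aeval M (p j)) := e.map_tsum
  have h2 : e (∑ j ∈ Finset.range k, α j • Polynomial.aeval M (p j))
      = ∑ j ∈ Finset.range k, e (α j • Polynomial.aeval M (p j)) := map_sum e _ _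
  rw [hsn, map_sub, h1, h2]
  set A : ℕ → (EuclideanSpace ℂ (Fin ℓ) →L[ℂ] EuclideanSpace ℂ (Fin ℓ)) :=
    fun j => e (α j • Polynomial.aeval M (p j)) with hA
  have htail : (∑' j, A j) - ∑ j ∈ Finset.range k, A j = ∑' j, A (j + k) := by
    rw [← hesum.sum_add_tsum_nat_add k]
    abel
  rw [htail]
  have hub : ∀ j, ‖A (j + k)‖ ≤ (B * r ^ k) * r ^ j := by
    intro j
    refine le_trans (key (j + k)) (le_of_eq ?_)
    rw [pow_add]; ring
  have hsum2 : Summable fun j => (B * r ^ k) * r ^ j :=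
    (summable_geometric_of_lt_one hr0 hr1).mul_left _
  calc ‖∑' j, A (j + k)‖ ≤ ∑' j, (B * r ^ k) * r ^ j :=
        tsum_of_norm_bounded hsum2.hasSum hub
    _ = B * r ^ k * (1 - r)⁻¹ := by
        rw [tsum_mul_left, tsum_geometric_of_lt_one hr0 hr1]
    _ = c * K * M₀ * specNorm V * specNorm V⁻¹ * (τ / ρ) ^ k / (1 - τ / ρ) := by
        rw [hB, div_eq_mul_inv]
end

section
/- Let M ∈ ℂ^{ℓ×ℓ} be diagonalizable, M = VΛV^{−1}, let (p_j)_{j≥0} ⊂ ℂ[x], (α_j)_{j≥0} ⊂ ℂ, and suppose there are constants C, M₀, c > 0 and ρ > 1 such that |α_j| ≤ C·M₀·ρ^{−j} for all j and |p_j(λ)| ≤ c for all j and all λ ∈ σ(M); let F = Σ_{j≥0} α_j p_j(M) (which converges). If (α̃_j)_{j≥0} ⊂ ℂ are perturbed coefficients with |α̃_j − α_j| ≤ ε for all j, then for every k ≥ 0, ‖F − Σ_{j=0}^{k−1} α̃_j p_j(M)‖₂ ≤ ‖V‖₂·‖V^{−1}‖₂·( ε·Σ_{j=0}^{k−1} max_{λ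 ∈ σ(M)} |p_j(λ)| + c·C·M₀·ρ^{−k}/(1 − ρ^{−1}) ). -/
section Aux
open scoped Matrix.Norms.L2Operator
open Matrix Polynomial

variable {ℓ : ℕ}

lemma specNorm_eq' (A : Matrix (Fin ℓ) (Fin ℓ) ℂ) : specNorm A = ‖A‖ := rfl

lemma conj_pow' (V Λ : Matrix (Fin ℓ) (Fin ℓ) ℂ) (hV : IsUnit V.det) (n : ℕ) :
    (V * Λ * V⁻¹) ^ n = V * Λ ^ n * V⁻¹ := by
  induction n with
  | zero => simp [Matrix.mul_nonsing_inv V hV]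
  | succ n ih =>
    rw [pow_succ, ih, pow_succ, mul_assoc (V * Λ ^ n), ← mul_assoc V⁻¹, ← mul_assoc V⁻¹,
      Matrix.nonsing_inv_mul V hV, one_mul]
    simp [mul_assoc]

lemma aeval_conj' (V Λ : Matrix (Fin ℓ) (Fin ℓ) ℂ) (hV : IsUnit V.det) (q : Polynomial ℂ) :
    Polynomial.aeval (V * Λ * V⁻¹) q = V * Polynomial.aeval Λ q * V⁻¹ := by
  rw [Polynomial.aeval_eq_sum_range, Polynomial.aeval_eq_sum_range, Finset.mul_sum,
    Finset.sum_mul]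
  refine Finset.sum_congr rfl fun i _ => ?_
  rw [conj_pow' V Λ hV i, mul_smul_comm, smul_mul_assoc]

lemma aeval_diagonal' (d : Fin ℓ → ℂ) (q : Polynomial ℂ) :
    Polynomial.aeval (Matrix.diagonal d) q = Matrix.diagonal fun i => q.eval (d i) := by
  rw [Polynomial.aeval_eq_sum_range]
  ext i j
  rcases eq_or_ne i j with rfl | h
  · simp [Matrix.sum_apply, Matrix.diagonal_pow, Polynomial.eval_eq_sum_range]
  · simp [Matrix.sum_apply, Matrix.diagonal_pow, Matrix.diagonal_apply_ne _ h]

lemma mem_spectrum_diagonal' (d : Fin ℓ → ℂ) (i : Fin ℓ) :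
    d i ∈ spectrum ℂ (Matrix.diagonal d) := by
  rw [spectrum.mem_iff, Matrix.isUnit_iff_isUnit_det]
  have h0 : (algebraMap ℂ (Matrix (Fin ℓ) (Fin ℓ) ℂ) (d i) - Matrix.diagonal d).det = 0 := by
    rw [Matrix.algebraMap_eq_diagonal, Matrix.diagonal_sub, Matrix.det_diagonal]
    exact Finset.prod_eq_zero (Finset.mem_univ i) (by simp)
  rw [h0]
  simp

lemma l2_norm_diagonal_le' (d : Fin ℓ → ℂ) (b : ℝ) (hb : 0 ≤ b)
    (hd : ∀ i, ‖d i‖ ≤ b) : ‖Matrix.diagonal d‖ ≤ b := by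
  rw [Matrix.l2_opNorm_def]
  refine ContinuousLinearMap.opNorm_le_bound _ hb fun x => ?_
  have hx : ∀ i : Fin ℓ,
      ‖(LinearEquiv.trans Matrix.toEuclideanLin LinearMap.toContinuousLinearMap
        (Matrix.diagonal d) x) i‖ ^ 2 ≤ b ^ 2 * ‖x i‖ ^ 2 := by
    intro i
    have : (LinearEquiv.trans Matrix.toEuclideanLin LinearMap.toContinuousLinearMap
        (Matrix.diagonal d) x) i = d i * x i := by
      simp [Matrix.toEuclideanLin_apply, Matrix.mulVec_diagonal]
    rw [this, norm_mul, mul_pow]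
    have h := hd i
    gcongr
  calc ‖(LinearEquiv.trans Matrix.toEuclideanLin LinearMap.toContinuousLinearMap
        (Matrix.diagonal d) x)‖
      = Real.sqrt (∑ i, ‖(LinearEquiv.trans Matrix.toEuclideanLin
          LinearMap.toContinuousLinearMap (Matrix.diagonal d) x) i‖ ^ 2) :=
        EuclideanSpace.norm_eq _
    _ ≤ Real.sqrt (∑ i, b ^ 2 * ‖x i‖ ^ 2) :=
        Real.sqrt_le_sqrt (Finset.sum_le_sum fun i _ => hx i)
    _ = b * ‖x‖ := by
        rw [← Finset.mul_sum, Real.sqrt_mul (by positivity), EuclideanSpace.norm_eq,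
          Real.sqrt_sq hb]


set_option maxHeartbeats 1000000 in
theorem aux_main (M V Λ : Matrix (Fin ℓ) (Fin ℓ) ℂ)
    (hV : IsUnit V.det) (hΛ : Λ.IsDiag) (hM : M = V * Λ * V⁻¹)
    (p : ℕ → Polynomial ℂ) (α αt : ℕ → ℂ) (ε : ℝ)
    (K M₀ c ρ : ℝ) (hK : 0 < K) (hM₀ : 0 < M₀) (hc : 0 < c) (hρ : 1 < ρ)
    (hα : ∀ j, ‖α j‖ ≤ K * M₀ * ρ⁻¹ ^ j)
    (hp : ∀ j, ∀ μ ∈ spectrum ℂ M, ‖(p j).eval μ‖ ≤ c)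
    (hαt : ∀ j, ‖αt j - α j‖ ≤ ε) :
    Summable (fun j => α j • Polynomial.aeval M (p j)) ∧
      ∀ k, specNorm ((∑' j, α j • Polynomial.aeval M (p j)) -
            ∑ j ∈ Finset.range k, αt j • Polynomial.aeval M (p j)) ≤
          specNorm V * specNorm V⁻¹ *
            (ε * ∑ j ∈ Finset.range k,
                sSup ((fun μ => ‖(p j).eval μ‖) '' spectrum ℂ M) +
              c * K * M₀ * ρ⁻¹ ^ k / (1 - ρ⁻¹)) := by
  set P : ℕ → Matrix (Fin ℓ) (Fin ℓ) ℂ := fun j => Polynomial.aeval M (p j) with hPdef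
  set b : ℕ → ℝ := fun j => sSup ((fun μ => ‖(p j).eval μ‖) '' spectrum ℂ M) with hbdef
  set W : ℝ := ‖V‖ * ‖V⁻¹‖ with hWdef
  have hW0 : 0 ≤ W := mul_nonneg (norm_nonneg _) (norm_nonneg _)
  have hspec : ∀ i, Λ i i ∈ spectrum ℂ M := by
    intro i
    have hVu : IsUnit V := (Matrix.isUnit_iff_isUnit_det V).mpr hV
    have hsp : spectrum ℂ M = spectrum ℂ Λ := by
      rw [hM, ← hVu.unit_spec, ← Matrix.coe_units_inv, spectrum.units_conjugate]
    rw [hsp, ← hΛ.diagonal_diag]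
    simpa using mem_spectrum_diagonal' Λ.diag i
  have hbdd : ∀ j, BddAbove ((fun μ => ‖(p j).eval μ‖) '' spectrum ℂ M) := by
    intro j
    refine ⟨c, ?_⟩
    rintro y ⟨μ, hμ, rfl⟩
    exact hp j μ hμ
  have hble : ∀ j i, ‖(p j).eval (Λ i i)‖ ≤ b j := fun j i =>
    le_csSup (hbdd j) ⟨Λ i i, hspec i, rfl⟩
  have hb0 : ∀ j, 0 ≤ b j := by
    intro j
    apply Real.sSup_nonneg
    rintro y ⟨μ, hμ, rfl⟩
    exact norm_nonneg _
  have hbc : ∀ j, b j ≤ c := by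
    intro j
    apply Real.sSup_le _ hc.le
    rintro y ⟨μ, hμ, rfl⟩
    exact hp j μ hμ
  have hP : ∀ j, ‖P j‖ ≤ W * b j := by
    intro j
    have h1 : P j = V * Matrix.diagonal (fun i => (p j).eval (Λ.diag i)) * V⁻¹ := by
      rw [hPdef]
      simp only
      rw [hM, aeval_conj' V Λ hV, ← hΛ.diagonal_diag, aeval_diagonal']
      simp
    have h2 : ‖Matrix.diagonal (fun i => (p j).eval (Λ.diag i))‖ ≤ b j :=
      l2_norm_diagonal_le' _ (b j) (hb0 j) fun i => hble j i
    calc ‖P j‖ ≤ ‖V * Matrix.diagonal (fun i => (p j).eval (Λ.diag i))‖ * ‖V⁻¹‖ := by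
          rw [h1]; exact Matrix.l2_opNorm_mul _ _
      _ ≤ ‖V‖ * ‖Matrix.diagonal (fun i => (p j).eval (Λ.diag i))‖ * ‖V⁻¹‖ := by
          have := Matrix.l2_opNorm_mul V (Matrix.diagonal (fun i => (p j).eval (Λ.diag i)))
          gcongr
      _ ≤ ‖V‖ * b j * ‖V⁻¹‖ := by gcongr
      _ = W * b j := by rw [hWdef]; ring
  set g : ℕ → ℝ := fun j => K * M₀ * (W * c) * ρ⁻¹ ^ j with hgdef
  have hρ0 : (0:ℝ) ≤ ρ⁻¹ := inv_nonneg.2 (by linarith)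
  have hρ1 : ρ⁻¹ < 1 := inv_lt_one_of_one_lt₀ hρ
  have hAnorm : ∀ j, ‖α j • P j‖ ≤ g j := by
    intro j
    calc ‖α j • P j‖ = ‖α j‖ * ‖P j‖ := norm_smul _ _
      _ ≤ K * M₀ * ρ⁻¹ ^ j * (W * c) := by
          refine mul_le_mul (hα j) ((hP j).trans ?_) (norm_nonneg _) (by positivity)
          exact mul_le_mul_of_nonneg_left (hbc j) hW0
      _ = g j := by rw [hgdef]; ring
  have hgsum : Summable g := (summable_geometric_of_lt_one hρ0 hρ1).mul_left _
  have hsum : Summable (fun j => α j • P j) :=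
    Summable.of_norm_bounded hgsum hAnorm
  have hsn : Summable (fun j => ‖α j • P j‖) :=
    Summable.of_nonneg_of_le (fun _ => norm_nonneg _) hAnorm hgsum
  refine ⟨hsum, fun k => ?_⟩
  have ε0 : 0 ≤ ε := (norm_nonneg _).trans (hαt 0)
  have hsplit : (∑' j, α j • P j) - ∑ j ∈ Finset.range k, αt j • P j =
      (∑ j ∈ Finset.range k, (α j - αt j) • P j) + ∑' i, α (i + k) • P (i + k) := by
    rw [← Summable.sum_add_tsum_nat_add k hsum]
    simp only [sub_smul, Finset.sum_sub_distrib]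
    abel
  have hsn' : Summable (fun i => ‖α (i + k) • P (i + k)‖) :=
    (summable_nat_add_iff k).2 hsn
  have hgsum' : Summable (fun i => g (i + k)) := (summable_nat_add_iff k).2 hgsum
  have htail : ‖∑' i, α (i + k) • P (i + k)‖ ≤ K * M₀ * (W * c) * (ρ⁻¹ ^ k * (1 - ρ⁻¹)⁻¹) := by
    calc ‖∑' i, α (i + k) • P (i + k)‖ ≤ ∑' i, ‖α (i + k) • P (i + k)‖ :=
          norm_tsum_le_tsum_norm hsn'
      _ ≤ ∑' i, g (i + k) := Summable.tsum_le_tsum (fun i => hAnorm (i + k)) hsn' hgsum'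
      _ = K * M₀ * (W * c) * (ρ⁻¹ ^ k * (1 - ρ⁻¹)⁻¹) := by
          simp only [hgdef, pow_add]
          rw [tsum_mul_left]
          rw [show (fun i : ℕ => ρ⁻¹ ^ i * ρ⁻¹ ^ k) = fun i : ℕ => ρ⁻¹ ^ i * ρ⁻¹ ^ k from rfl]
          rw [tsum_mul_right, tsum_geometric_of_lt_one hρ0 hρ1]
          ring
  have hhead : ‖∑ j ∈ Finset.range k, (α j - αt j) • P j‖ ≤
      ∑ j ∈ Finset.range k, ε * (W * b j) := by
    refine (norm_sum_le _ _).trans (Finset.sum_le_sum fun j _ => ?_)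
    rw [norm_smul]
    refine mul_le_mul ?_ (hP j) (norm_nonneg _) ε0
    rw [← norm_neg, neg_sub]
    exact hαt j
  have hfinal := (hsplit ▸ (norm_add_le _ _)).trans (add_le_add hhead htail)
  rw [specNorm_eq', specNorm_eq', specNorm_eq']
  refine hfinal.trans (le_of_eq ?_)
  have hsum_eq : ∑ j ∈ Finset.range k, ε * (W * b j) = ε * W * ∑ j ∈ Finset.range k, b j := by
    rw [Finset.mul_sum]
    exact Finset.sum_congr rfl fun j _ => by ring
  rw [hsum_eq, ← hWdef]
  ring
end Aux

/-- Let `M = V Λ V⁻¹` be diagonalizable, `|α_j| ≤ C·M₀·ρ^{-j}` with `ρ > 1`,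
`|p_j(λ)| ≤ c` on `σ(M)`, and `F = Σ_j α_j p_j(M)` (which converges).  If `|α̃_j - α_j| ≤ ε`
for all `j`, then for every `k`,
`‖F - Σ_{j<k} α̃_j p_j(M)‖₂ ≤
  ‖V‖₂·‖V⁻¹‖₂·(ε·Σ_{j<k} max_{λ∈σ(M)} |p_j(λ)| + c·C·M₀·ρ^{-k}/(1-ρ⁻¹))`. -/
theorem akhiezer_iteration_inexact_coeffs {ℓ : ℕ}
    (M V Λ : Matrix (Fin ℓ) (Fin ℓ) ℂ)
    (hV : IsUnit V.det) (hΛ : Λ.IsDiag) (hM : M = V * Λ * V⁻¹)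
    (p : ℕ → Polynomial ℂ) (α αt : ℕ → ℂ) (ε : ℝ)
    (K M₀ c ρ : ℝ) (hK : 0 < K) (hM₀ : 0 < M₀) (hc : 0 < c) (hρ : 1 < ρ)
    (hα : ∀ j, ‖α j‖ ≤ K * M₀ * ρ⁻¹ ^ j)
    (hp : ∀ j, ∀ μ ∈ spectrum ℂ M, ‖(p j).eval μ‖ ≤ c)
    (hαt : ∀ j, ‖αt j - α j‖ ≤ ε) :
    Summable (fun j => α j • Polynomial.aeval M (p j)) ∧
      ∀ k, specNorm ((∑' j, α j • Polynomial.aeval M (p j)) -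
            ∑ j ∈ Finset.range k, αt j • Polynomial.aeval M (p j)) ≤
          specNorm V * specNorm V⁻¹ *
            (ε * ∑ j ∈ Finset.range k,
                sSup ((fun μ => ‖(p j).eval μ‖) '' spectrum ℂ M) +
              c * K * M₀ * ρ⁻¹ ^ k / (1 - ρ⁻¹)) := by
  exact aux_main M V Λ hV hΛ hM p α αt ε K M₀ c ρ hK hM₀ hc hρ hα hp hαt
end

section
/- Let A ∈ ℂ^{n×n} and B ∈ ℂ^{m×m} be diagonalizable, A = V_A Λ_A V_A^{−1}, B = V_B Λ_B V_B^{−1}, with σ(A) ∩ σ(B) = ∅, let C ∈ ℂ^{m×n}, and let X be the unique solution of XA − BX = C. Suppose (p_j)_{j≥0} ⊂ ℂ[x] and (α_j)_{j≥0} ⊂ ℂ satisfy, for constants d, c > 0 and ρ > 1: |α_j| ≤ d·ρ^{−j} for all j, |p_j(λ − μ)| ≤ c for all j and all λ ∈ σ(A), μ ∈ σ(B), and Σ_{j≥0} α_j p_j(λ − μ) = 1/(λ − μ) for all λ ∈ σ(A), μ ∈ σ(B). Let X_k = Σ_{j=0}^{k−1} α_j · p_j(S_{A,B})(C). Then for every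 k ≥ 0, ‖X_k − X‖_F ≤ c·d·‖V_A‖₂·‖V_A^{−1}‖₂·‖V_B‖₂·‖V_B^{−1}‖₂·‖C‖_F·ρ^{−k}/(1 − ρ^{−1}). -/
/-- The Sylvester operator `Y ↦ Y*A - B*Y` as a linear endomorphism of `ℂ^{m×n}`. -/
noncomputable def sylvesterOp {n m : ℕ} (A : Matrix (Fin n) (Fin n) ℂ)
    (B : Matrix (Fin m) (Fin m) ℂ) : Module.End ℂ (Matrix (Fin m) (Fin n) ℂ) where
  toFun Y := Y * A - B * Y
  map_add' X Y := by
    simp only [Matrix.add_mul, Matrix.mul_add, sub_add_sub_comm]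
  map_smul' c Y := by
    simp [Matrix.smul_mul, Matrix.mul_smul, smul_sub]

/-- The Frobenius norm of a complex matrix. -/
noncomputable def frobNorm {m n : ℕ} (M : Matrix (Fin m) (Fin n) ℂ) : ℝ :=
  Real.sqrt (∑ i, ∑ j, ‖M i j‖ ^ 2)

open Matrix

open scoped Matrix.Norms.L2Operator in
lemma specNorm_eq_l2 {m n : ℕ} (M : Matrix (Fin m) (Fin n) ℂ) : specNorm M = ‖M‖ := rfl

lemma euc_norm_sq {m : ℕ} (v : Fin m → ℂ) :
    ‖(WithLp.equiv 2 (Fin m → ℂ)).symm v‖ ^ 2 = ∑ i, ‖v i‖ ^ 2 := by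
  rw [EuclideanSpace.norm_eq, Real.sq_sqrt (by positivity)]
  simp

lemma mulVec_norm_sq_le {m n : ℕ} (P : Matrix (Fin m) (Fin n) ℂ) (v : Fin n → ℂ) :
    ∑ i, ‖(P *ᵥ v) i‖ ^ 2 ≤ specNorm P ^ 2 * ∑ j, ‖v j‖ ^ 2 := by
  rw [← euc_norm_sq, ← euc_norm_sq]
  have h : ‖(WithLp.equiv 2 (Fin m → ℂ)).symm (P *ᵥ v)‖ ≤
      specNorm P * ‖(WithLp.equiv 2 (Fin n → ℂ)).symm v‖ := by
    have := (LinearMap.toContinuousLinearMap (Matrix.toEuclideanLin P)).le_opNorm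
      ((WithLp.equiv 2 (Fin n → ℂ)).symm v)
    simpa [specNorm] using this
  calc ‖(WithLp.equiv 2 (Fin m → ℂ)).symm (P *ᵥ v)‖ ^ 2
      ≤ (specNorm P * ‖(WithLp.equiv 2 (Fin n → ℂ)).symm v‖) ^ 2 :=
        pow_le_pow_left₀ (norm_nonneg _) h 2
    _ = specNorm P ^ 2 * ‖(WithLp.equiv 2 (Fin n → ℂ)).symm v‖ ^ 2 := by ring

lemma frobNorm_mul_left {k m n : ℕ} (P : Matrix (Fin m) (Fin k) ℂ)
    (M : Matrix (Fin k) (Fin n) ℂ) :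
    frobNorm (P * M) ≤ specNorm P * frobNorm M := by
  have hP : 0 ≤ specNorm P := norm_nonneg _
  have key : ∑ j : Fin n, ∑ i : Fin m, ‖(P * M) i j‖ ^ 2
      ≤ specNorm P ^ 2 * ∑ j : Fin n, ∑ i : Fin k, ‖M i j‖ ^ 2 := by
    rw [Finset.mul_sum]
    apply Finset.sum_le_sum
    intro j _
    have := mulVec_norm_sq_le P (fun i => M i j)
    simpa [Matrix.mul_apply, Matrix.mulVec, dotProduct] using this
  calc frobNorm (P * M) = Real.sqrt (∑ j : Fin n, ∑ i : Fin m, ‖(P * M) i j‖ ^ 2) := by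
        rw [frobNorm, Finset.sum_comm]
    _ ≤ Real.sqrt (specNorm P ^ 2 * ∑ j : Fin n, ∑ i : Fin k, ‖M i j‖ ^ 2) :=
        Real.sqrt_le_sqrt key
    _ = specNorm P * frobNorm M := by
        rw [Real.sqrt_mul (by positivity), Real.sqrt_sq hP, frobNorm, Finset.sum_comm]

lemma euc_norm_star {m : ℕ} (v : Fin m → ℂ) :
    ‖(WithLp.equiv 2 (Fin m → ℂ)).symm (fun i => star (v i))‖
      = ‖(WithLp.equiv 2 (Fin m → ℂ)).symm v‖ := by
  rw [EuclideanSpace.norm_eq, EuclideanSpace.norm_eq]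
  simp

lemma specNorm_map_star_le {m n : ℕ} (M : Matrix (Fin m) (Fin n) ℂ) :
    specNorm (M.map star) ≤ specNorm M := by
  rw [specNorm]
  apply ContinuousLinearMap.opNorm_le_bound _ (norm_nonneg _)
  intro x
  set v : Fin n → ℂ := WithLp.equiv 2 (Fin n → ℂ) x with hv
  have hmv : (M.map star) *ᵥ v = fun i => star ((M *ᵥ (fun j => star (v j))) i) := by
    funext i
    simp [Matrix.mulVec, dotProduct, Matrix.map_apply, ← star_mul']
  have h1 : ‖LinearMap.toContinuousLinearMap (Matrix.toEuclideanLin (M.map star)) x‖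
      = ‖(WithLp.equiv 2 (Fin m → ℂ)).symm (M *ᵥ (fun j => star (v j)))‖ := by
    rw [LinearMap.coe_toContinuousLinearMap', Matrix.toEuclideanLin_apply]
    rw [show x.ofLp = v from rfl, hmv]
    exact euc_norm_star _
  have h2 : ‖(WithLp.equiv 2 (Fin m → ℂ)).symm (M *ᵥ (fun j => star (v j)))‖
      ≤ specNorm M * ‖x‖ := by
    have hle := (LinearMap.toContinuousLinearMap (Matrix.toEuclideanLin M)).le_opNorm
      ((WithLp.equiv 2 (Fin n → ℂ)).symm (fun j => star (v j)))
    rw [LinearMap.coe_toContinuousLinearMap'] at hle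
    calc ‖(WithLp.equiv 2 (Fin m → ℂ)).symm (M *ᵥ (fun j => star (v j)))‖
        ≤ specNorm M * ‖(WithLp.equiv 2 (Fin n → ℂ)).symm (fun j => star (v j))‖ := hle
      _ = specNorm M * ‖x‖ := by rw [euc_norm_star, hv, Equiv.symm_apply_apply]
  exact h1 ▸ h2

lemma specNorm_map_star {m n : ℕ} (M : Matrix (Fin m) (Fin n) ℂ) :
    specNorm (M.map star) = specNorm M := by
  refine le_antisymm (specNorm_map_star_le M) ?_
  have := specNorm_map_star_le (M.map star)
  rwa [show (M.map star).map star = M by ext i j; simp [Matrix.map_apply]] at this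

open scoped Matrix.Norms.L2Operator in
lemma specNorm_transpose {m n : ℕ} (M : Matrix (Fin m) (Fin n) ℂ) :
    specNorm Mᵀ = specNorm M := by
  have h : Mᵀ = (Mᴴ).map star := by
    ext i j; simp [Matrix.conjTranspose_apply, Matrix.map_apply]
  rw [h, specNorm_map_star, specNorm_eq_l2, specNorm_eq_l2, Matrix.l2_opNorm_conjTranspose]

lemma frobNorm_transpose {m n : ℕ} (M : Matrix (Fin m) (Fin n) ℂ) :
    frobNorm Mᵀ = frobNorm M := by
  rw [frobNorm, frobNorm, Finset.sum_comm]
  simp [Matrix.transpose_apply]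

lemma frobNorm_mul_right {m k n : ℕ} (M : Matrix (Fin m) (Fin k) ℂ)
    (Q : Matrix (Fin k) (Fin n) ℂ) :
    frobNorm (M * Q) ≤ frobNorm M * specNorm Q := by
  calc frobNorm (M * Q) = frobNorm ((M * Q)ᵀ) := (frobNorm_transpose _).symm
    _ = frobNorm (Qᵀ * Mᵀ) := by rw [Matrix.transpose_mul]
    _ ≤ specNorm Qᵀ * frobNorm Mᵀ := frobNorm_mul_left _ _
    _ = frobNorm M * specNorm Q := by rw [specNorm_transpose, frobNorm_transpose, mul_comm]

lemma frobNorm_le_of_entrywise {m n : ℕ} {M N : Matrix (Fin m) (Fin n) ℂ} {K : ℝ}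
    (hK : 0 ≤ K) (h : ∀ i j, ‖M i j‖ ≤ K * ‖N i j‖) :
    frobNorm M ≤ K * frobNorm N := by
  rw [frobNorm, frobNorm, show K * Real.sqrt (∑ i, ∑ j, ‖N i j‖ ^ 2)
      = Real.sqrt (K ^ 2 * ∑ i, ∑ j, ‖N i j‖ ^ 2) by
    rw [Real.sqrt_mul (by positivity), Real.sqrt_sq hK]]
  apply Real.sqrt_le_sqrt
  rw [Finset.mul_sum]
  refine Finset.sum_le_sum fun i _ => ?_
  rw [Finset.mul_sum]
  refine Finset.sum_le_sum fun j _ => ?_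
  calc ‖M i j‖ ^ 2 ≤ (K * ‖N i j‖) ^ 2 := pow_le_pow_left₀ (norm_nonneg _) (h i j) 2
    _ = K ^ 2 * ‖N i j‖ ^ 2 := by ring

lemma tail_bound {f : ℕ → ℂ} {s : ℂ} (h : HasSum f s) {c d ρi : ℝ}
    (hρi0 : 0 ≤ ρi) (hρi : ρi < 1)
    (hf : ∀ j, ‖f j‖ ≤ c * d * ρi ^ j) (k : ℕ) :
    ‖(∑ j ∈ Finset.range k, f j) - s‖ ≤ c * d * ρi ^ k / (1 - ρi) := by
  have hsum : Summable f := h.summable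
  have hgeo : Summable (fun i : ℕ => ρi ^ i) := summable_geometric_of_lt_one hρi0 hρi
  have hg : Summable (fun i : ℕ => c * d * ρi ^ k * ρi ^ i) := hgeo.mul_left _
  have hnorm : Summable (fun i : ℕ => ‖f (i + k)‖) := by
    apply Summable.of_nonneg_of_le (fun i => norm_nonneg _) (fun i => ?_) hg
    calc ‖f (i + k)‖ ≤ c * d * ρi ^ (i + k) := hf _
      _ = c * d * ρi ^ k * ρi ^ i := by rw [pow_add]; ring
  have hkey : (∑ j ∈ Finset.range k, f j) - s = -(∑' i, f (i + k)) := by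
    have := Summable.sum_add_tsum_nat_add k hsum
    rw [h.tsum_eq] at this
    linear_combination this
  rw [hkey, norm_neg]
  calc ‖∑' i, f (i + k)‖ ≤ ∑' i, ‖f (i + k)‖ := norm_tsum_le_tsum_norm hnorm
    _ ≤ ∑' i : ℕ, c * d * ρi ^ k * ρi ^ i := by
        apply Summable.tsum_le_tsum _ hnorm hg
        intro i
        calc ‖f (i + k)‖ ≤ c * d * ρi ^ (i + k) := hf _
          _ = c * d * ρi ^ k * ρi ^ i := by rw [pow_add]; ring
    _ = c * d * ρi ^ k * (1 - ρi)⁻¹ := by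
        rw [tsum_mul_left, tsum_geometric_of_lt_one hρi0 hρi]
    _ = c * d * ρi ^ k / (1 - ρi) := by rw [div_eq_mul_inv]

/-- Let `A = V_A Λ_A V_A⁻¹`, `B = V_B Λ_B V_B⁻¹` be diagonalizable with
disjoint spectra, and let `X` be the solution of `X*A - B*X = C`.  Suppose `|α_j| ≤ d·ρ^{-j}`
with `ρ > 1`, `|p_j(λ-μ)| ≤ c` and `Σ_j α_j p_j(λ-μ) = 1/(λ-μ)` for all `λ ∈ σ(A)`,
`μ ∈ σ(B)`.  Then with `X_k = Σ_{j<k} α_j p_j(S_{A,B})(C)`,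
`‖X_k - X‖_F ≤ c·d·‖V_A‖₂‖V_A⁻¹‖₂‖V_B‖₂‖V_B⁻¹‖₂·‖C‖_F·ρ^{-k}/(1-ρ⁻¹)` for every `k`. -/
theorem sylvesterOp_inverse_iteration_conv_rate {n m : ℕ}
    (A : Matrix (Fin n) (Fin n) ℂ) (B : Matrix (Fin m) (Fin m) ℂ)
    (C X : Matrix (Fin m) (Fin n) ℂ)
    (VA ΛA : Matrix (Fin n) (Fin n) ℂ)
    (hVA : IsUnit VA.det) (hΛA : ΛA.IsDiag) (hA : A = VA * ΛA * VA⁻¹)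
    (VB ΛB : Matrix (Fin m) (Fin m) ℂ)
    (hVB : IsUnit VB.det) (hΛB : ΛB.IsDiag) (hB : B = VB * ΛB * VB⁻¹)
    (hdisj : spectrum ℂ A ∩ spectrum ℂ B = ∅)
    (hX : X * A - B * X = C)
    (p : ℕ → Polynomial ℂ) (α : ℕ → ℂ)
    (d c ρ : ℝ) (hd : 0 < d) (hc : 0 < c) (hρ : 1 < ρ)
    (hα : ∀ j, ‖α j‖ ≤ d * ρ⁻¹ ^ j)
    (hp : ∀ j, ∀ lam ∈ spectrum ℂ A, ∀ μ ∈ spectrum ℂ B, ‖(p j).eval (lam - μ)‖ ≤ c)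
    (hinv : ∀ lam ∈ spectrum ℂ A, ∀ μ ∈ spectrum ℂ B,
      HasSum (fun j => α j * (p j).eval (lam - μ)) (lam - μ)⁻¹) :
    ∀ k, frobNorm ((∑ j ∈ Finset.range k,
          α j • Polynomial.aeval (sylvesterOp A B) (p j) C) - X) ≤
        c * d * specNorm VA * specNorm VA⁻¹ * specNorm VB * specNorm VB⁻¹ * frobNorm C *
          ρ⁻¹ ^ k / (1 - ρ⁻¹) := by
  intro k
  -- basic positivity facts
  have hρ0 : (0:ℝ) < ρ := lt_trans one_pos hρ
  have hρi0 : (0:ℝ) ≤ ρ⁻¹ := by positivity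
  have hρi1 : ρ⁻¹ < 1 := by
    rw [inv_lt_one_iff₀]; right; exact hρ
  have hden : (0:ℝ) < 1 - ρ⁻¹ := by linarith
  set E : ℝ := c * d * ρ⁻¹ ^ k / (1 - ρ⁻¹) with hE
  have hE0 : 0 ≤ E := by positivity
  -- spectra
  have specA : spectrum ℂ A = Set.range ΛA.diag := by
    have h1 : A = (VA.nonsingInvUnit hVA : Matrix (Fin n) (Fin n) ℂ) * ΛA *
        ((VA.nonsingInvUnit hVA)⁻¹ : (Matrix (Fin n) (Fin n) ℂ)ˣ) := hA
    rw [h1, spectrum.units_conjugate]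
    conv_lhs => rw [← hΛA.diagonal_diag]
    rw [spectrum_diagonal]
  have specB : spectrum ℂ B = Set.range ΛB.diag := by
    have h1 : B = (VB.nonsingInvUnit hVB : Matrix (Fin m) (Fin m) ℂ) * ΛB *
        ((VB.nonsingInvUnit hVB)⁻¹ : (Matrix (Fin m) (Fin m) ℂ)ˣ) := hB
    rw [h1, spectrum.units_conjugate]
    conv_lhs => rw [← hΛB.diagonal_diag]
    rw [spectrum_diagonal]
  have memA : ∀ j : Fin n, ΛA j j ∈ spectrum ℂ A := by
    intro j; rw [specA]; exact ⟨j, rfl⟩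
  have memB : ∀ i : Fin m, ΛB i i ∈ spectrum ℂ B := by
    intro i; rw [specB]; exact ⟨i, rfl⟩
  have hne : ∀ (i : Fin m) (j : Fin n), ΛA j j - ΛB i i ≠ 0 := by
    intro i j h
    have heq : ΛA j j = ΛB i i := by linear_combination h
    have : ΛA j j ∈ spectrum ℂ A ∩ spectrum ℂ B := ⟨memA j, heq ▸ memB i⟩
    rw [hdisj] at this
    exact this
  -- intertwining
  have hVAinv : VA⁻¹ * VA = 1 := Matrix.nonsing_inv_mul _ hVA
  have hVBinv : VB⁻¹ * VB = 1 := Matrix.nonsing_inv_mul _ hVB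
  have hS : ∀ Y : Matrix (Fin m) (Fin n) ℂ, VB⁻¹ * (sylvesterOp A B Y) * VA
      = (VB⁻¹ * Y * VA) * ΛA - ΛB * (VB⁻¹ * Y * VA) := by
    intro Y
    show VB⁻¹ * (Y * A - B * Y) * VA = _
    rw [hA, hB]
    rw [Matrix.mul_sub, Matrix.sub_mul]
    simp only [Matrix.mul_assoc]
    rw [hVAinv, Matrix.mul_one]
    rw [show VB⁻¹ * (VB * (ΛB * (VB⁻¹ * (Y * VA)))) = VB⁻¹ * VB * (ΛB * (VB⁻¹ * (Y * VA))) by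
      simp only [Matrix.mul_assoc]]
    rw [hVBinv, Matrix.one_mul]
  have hdiag : ∀ (Z : Matrix (Fin m) (Fin n) ℂ) (i : Fin m) (j : Fin n),
      (Z * ΛA - ΛB * Z) i j = (ΛA j j - ΛB i i) * Z i j := by
    intro Z i j
    have h1 : (Z * ΛA) i j = Z i j * ΛA j j := by
      rw [Matrix.mul_apply, Finset.sum_eq_single j]
      · intro b _ hb
        rw [hΛA hb, mul_zero]
      · simp
    have h2 : (ΛB * Z) i j = ΛB i i * Z i j := by
      rw [Matrix.mul_apply, Finset.sum_eq_single i]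
      · intro b _ hb
        rw [hΛB hb.symm, zero_mul]
      · simp
    rw [Matrix.sub_apply, h1, h2]
    ring
  -- polynomial action entrywise
  have hpoly : ∀ (q : Polynomial ℂ) (Y : Matrix (Fin m) (Fin n) ℂ) (i : Fin m) (j : Fin n),
      (VB⁻¹ * (Polynomial.aeval (sylvesterOp A B) q Y) * VA) i j
        = q.eval (ΛA j j - ΛB i i) * (VB⁻¹ * Y * VA) i j := by
    intro q
    induction q using Polynomial.induction_on with
    | C a =>
      intro Y i j
      simp only [Polynomial.aeval_C, Polynomial.eval_C]
      show (VB⁻¹ * ((a • (1 : Module.End ℂ (Matrix (Fin m) (Fin n) ℂ))) Y) * VA) i j = _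
      simp [Matrix.mul_smul, Matrix.smul_mul, Matrix.smul_apply, smul_eq_mul]
    | add q r hq hr =>
      intro Y i j
      simp only [map_add, Polynomial.eval_add, LinearMap.add_apply]
      rw [Matrix.mul_add, Matrix.add_mul, Matrix.add_apply, hq, hr, add_mul]
    | monomial nn a ih =>
      intro Y i j
      have hrw : (Polynomial.C a * Polynomial.X ^ (nn + 1) : Polynomial ℂ)
          = (Polynomial.C a * Polynomial.X ^ nn) * Polynomial.X := by ring
      rw [hrw, map_mul (Polynomial.aeval (sylvesterOp A B))
        (Polynomial.C a * Polynomial.X ^ nn) (Polynomial.X : Polynomial ℂ)]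
      have happ : (Polynomial.aeval (sylvesterOp A B) (Polynomial.C a * Polynomial.X ^ nn) *
          Polynomial.aeval (sylvesterOp A B) (Polynomial.X : Polynomial ℂ)) Y
          = Polynomial.aeval (sylvesterOp A B) (Polynomial.C a * Polynomial.X ^ nn)
            (sylvesterOp A B Y) := by
        simp [Module.End.mul_apply, Polynomial.aeval_X]
      rw [happ, ih (sylvesterOp A B Y) i j]
      have hTS : (VB⁻¹ * (sylvesterOp A B Y) * VA) i j
          = (ΛA j j - ΛB i i) * (VB⁻¹ * Y * VA) i j := by
        rw [hS Y, hdiag]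
      rw [hTS]
      simp only [Polynomial.eval_mul, Polynomial.eval_pow, Polynomial.eval_C, Polynomial.eval_X]
      ring
  -- the solution X entrywise
  have hTX : ∀ (i : Fin m) (j : Fin n), (VB⁻¹ * X * VA) i j
      = (ΛA j j - ΛB i i)⁻¹ * (VB⁻¹ * C * VA) i j := by
    intro i j
    have hC : sylvesterOp A B X = C := hX
    have h1 : (VB⁻¹ * C * VA) i j = (ΛA j j - ΛB i i) * (VB⁻¹ * X * VA) i j := by
      rw [← hC, hS X, hdiag]
    rw [h1, ← mul_assoc, inv_mul_cancel₀ (hne i j), one_mul]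
  -- partial sum entrywise
  set Xk : Matrix (Fin m) (Fin n) ℂ :=
    ∑ j ∈ Finset.range k, α j • Polynomial.aeval (sylvesterOp A B) (p j) C with hXk
  have hTXk : ∀ (i : Fin m) (j : Fin n), (VB⁻¹ * Xk * VA) i j
      = (∑ j' ∈ Finset.range k, α j' * (p j').eval (ΛA j j - ΛB i i))
          * (VB⁻¹ * C * VA) i j := by
    intro i j
    rw [hXk, Matrix.mul_sum, Matrix.sum_mul, Matrix.sum_apply, Finset.sum_mul]
    refine Finset.sum_congr rfl fun j' _ => ?_
    rw [Matrix.mul_smul, Matrix.smul_mul, Matrix.smul_apply, smul_eq_mul,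
      hpoly (p j') C i j]
    ring
  -- entrywise bound on the transformed difference
  have hentry : ∀ (i : Fin m) (j : Fin n),
      ‖(VB⁻¹ * (Xk - X) * VA) i j‖ ≤ E * ‖(VB⁻¹ * C * VA) i j‖ := by
    intro i j
    have hsub : (VB⁻¹ * (Xk - X) * VA) i j
        = ((∑ j' ∈ Finset.range k, α j' * (p j').eval (ΛA j j - ΛB i i))
            - (ΛA j j - ΛB i i)⁻¹) * (VB⁻¹ * C * VA) i j := by
      rw [Matrix.mul_sub, Matrix.sub_mul, Matrix.sub_apply, hTXk i j, hTX i j, sub_mul]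
    rw [hsub, norm_mul]
    apply mul_le_mul_of_nonneg_right _ (norm_nonneg _)
    have hHS := hinv (ΛA j j) (memA j) (ΛB i i) (memB i)
    have hf : ∀ j', ‖α j' * (p j').eval (ΛA j j - ΛB i i)‖ ≤ c * d * ρ⁻¹ ^ j' := by
      intro j'
      rw [norm_mul]
      calc ‖α j'‖ * ‖(p j').eval (ΛA j j - ΛB i i)‖
          ≤ (d * ρ⁻¹ ^ j') * c := by
            apply mul_le_mul (hα j') (hp j' _ (memA j) _ (memB i)) (norm_nonneg _)
            positivity
        _ = c * d * ρ⁻¹ ^ j' := by ring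
    exact tail_bound hHS hρi0 hρi1 hf k
  -- Frobenius bound on the transformed difference
  have hfrobT : frobNorm (VB⁻¹ * (Xk - X) * VA) ≤ E * frobNorm (VB⁻¹ * C * VA) :=
    frobNorm_le_of_entrywise hE0 hentry
  -- reconstruct the difference
  have hVBinv' : VB * VB⁻¹ = 1 := Matrix.mul_nonsing_inv _ hVB
  have hVAinv' : VA * VA⁻¹ = 1 := Matrix.mul_nonsing_inv _ hVA
  have hrec : Xk - X = VB * (VB⁻¹ * (Xk - X) * VA) * VA⁻¹ := by
    simp only [Matrix.mul_assoc]
    rw [hVAinv', Matrix.mul_one]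
    rw [show VB * (VB⁻¹ * (Xk - X)) = VB * VB⁻¹ * (Xk - X) by simp only [Matrix.mul_assoc]]
    rw [hVBinv', Matrix.one_mul]
  -- assemble the norm chain
  have hTCbound : frobNorm (VB⁻¹ * C * VA) ≤ specNorm VB⁻¹ * frobNorm C * specNorm VA := by
    calc frobNorm (VB⁻¹ * C * VA) ≤ frobNorm (VB⁻¹ * C) * specNorm VA :=
          frobNorm_mul_right _ _
      _ ≤ specNorm VB⁻¹ * frobNorm C * specNorm VA := by
          apply mul_le_mul_of_nonneg_right (frobNorm_mul_left _ _) (norm_nonneg _)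
  have hchain : frobNorm (Xk - X)
      ≤ specNorm VB * (E * (specNorm VB⁻¹ * frobNorm C * specNorm VA)) * specNorm VA⁻¹ := by
    calc frobNorm (Xk - X) = frobNorm (VB * (VB⁻¹ * (Xk - X) * VA) * VA⁻¹) := by rw [← hrec]
      _ ≤ frobNorm (VB * (VB⁻¹ * (Xk - X) * VA)) * specNorm VA⁻¹ := frobNorm_mul_right _ _
      _ ≤ specNorm VB * frobNorm (VB⁻¹ * (Xk - X) * VA) * specNorm VA⁻¹ :=
          mul_le_mul_of_nonneg_right (frobNorm_mul_left _ _) (norm_nonneg _)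
      _ ≤ specNorm VB * (E * frobNorm (VB⁻¹ * C * VA)) * specNorm VA⁻¹ := by
          apply mul_le_mul_of_nonneg_right _ (norm_nonneg _)
          exact mul_le_mul_of_nonneg_left hfrobT (norm_nonneg _)
      _ ≤ specNorm VB * (E * (specNorm VB⁻¹ * frobNorm C * specNorm VA)) * specNorm VA⁻¹ := by
          apply mul_le_mul_of_nonneg_right _ (norm_nonneg _)
          apply mul_le_mul_of_nonneg_left _ (norm_nonneg _)
          exact mul_le_mul_of_nonneg_left hTCbound hE0
  calc frobNorm (Xk - X)
      ≤ specNorm VB * (E * (specNorm VB⁻¹ * frobNorm C * specNorm VA)) * specNorm VA⁻¹ :=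
        hchain
    _ = c * d * specNorm VA * specNorm VA⁻¹ * specNorm VB * specNorm VB⁻¹ * frobNorm C *
          ρ⁻¹ ^ k / (1 - ρ⁻¹) := by
        rw [hE]; ring
end

section
/- Let A ∈ ℂ^{n×n} and B ∈ ℂ^{m×m} with n, m ≥ 1. Then ν ∈ ℂ is an eigenvalue of the Sylvester operator S_{A,B} : ℂ^{m×n} → ℂ^{m×n} if and only if ν = λ − μ for some eigenvalue λ of A and some eigenvalue μ of B; that is, σ(S_{A,B}) = σ(A) − σ(B). -/
open scoped Pointwise

open Polynomial Matrix

lemma my_eval_charpoly {k : ℕ} (M : Matrix (Fin k) (Fin k) ℂ) (μ : ℂ) :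
    M.charpoly.eval μ = (μ • (1 : Matrix (Fin k) (Fin k) ℂ) - M).det := by
  rw [Matrix.charpoly, ← Polynomial.coe_evalRingHom, RingHom.map_det]
  congr 1
  ext i j
  by_cases h : i = j <;>
    simp [Matrix.charmatrix_apply, Matrix.one_apply, h, Matrix.diagonal_apply]

lemma my_mem_spectrum_iff {k : ℕ} {M : Matrix (Fin k) (Fin k) ℂ} {μ : ℂ} :
    μ ∈ spectrum ℂ M ↔ (μ • (1 : Matrix (Fin k) (Fin k) ℂ) - M).det = 0 := by
  rw [spectrum.mem_iff, Algebra.algebraMap_eq_smul_one,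
    ← not_iff_comm, Matrix.isUnit_iff_isUnit_det, isUnit_iff_ne_zero]

lemma my_mul_pow_comm {n m : ℕ} {A : Matrix (Fin n) (Fin n) ℂ}
    {B' : Matrix (Fin m) (Fin m) ℂ} {Y : Matrix (Fin m) (Fin n) ℂ}
    (h : Y * A = B' * Y) : ∀ k : ℕ, Y * A ^ k = B' ^ k * Y
  | 0 => by simp
  | k + 1 => by
      rw [pow_succ, ← Matrix.mul_assoc, my_mul_pow_comm h k, Matrix.mul_assoc, h,
        ← Matrix.mul_assoc, ← pow_succ]

lemma my_mul_aeval_comm {n m : ℕ} {A : Matrix (Fin n) (Fin n) ℂ}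
    {B' : Matrix (Fin m) (Fin m) ℂ} {Y : Matrix (Fin m) (Fin n) ℂ}
    (h : Y * A = B' * Y) (p : Polynomial ℂ) :
    Y * (Polynomial.aeval A p) = (Polynomial.aeval B' p) * Y := by
  induction p using Polynomial.induction_on' with
  | add p q hp hq => simp only [map_add, Matrix.mul_add, Matrix.add_mul, hp, hq]
  | monomial k c =>
      rw [Polynomial.aeval_monomial, Polynomial.aeval_monomial,
        Algebra.algebraMap_eq_smul_one, Algebra.algebraMap_eq_smul_one,
        Matrix.smul_mul, Matrix.one_mul, Matrix.smul_mul, Matrix.one_mul,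
        Matrix.mul_smul, Matrix.smul_mul, my_mul_pow_comm h k]

theorem spectrum_sylvesterOp_aux {n m : ℕ}
    (A : Matrix (Fin n) (Fin n) ℂ) (B : Matrix (Fin m) (Fin m) ℂ) (ν : ℂ) :
    Module.End.HasEigenvalue (sylvesterOp A B) ν ↔
      ∃ lam ∈ spectrum ℂ A, ∃ μ ∈ spectrum ℂ B, ν = lam - μ := by
  constructor
  · intro hν
    obtain ⟨Y, hYvec⟩ := hν.exists_hasEigenvector
    have hY0 : Y ≠ 0 := hYvec.right
    have hYA : Y * A = (ν • (1 : Matrix (Fin m) (Fin m) ℂ) + B) * Y := by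
      have h := hYvec.apply_eq_smul
      simp only [sylvesterOp, LinearMap.coe_mk, AddHom.coe_mk] at h
      rw [Matrix.add_mul, Matrix.smul_mul, Matrix.one_mul]
      rw [sub_eq_iff_eq_add] at h
      rw [h]
    set B' : Matrix (Fin m) (Fin m) ℂ := ν • (1 : Matrix (Fin m) (Fin m) ℂ) + B with hB'
    have hchar : Y * (Polynomial.aeval A B'.charpoly) = 0 := by
      rw [my_mul_aeval_comm hYA, B'.aeval_self_charpoly, Matrix.zero_mul]
    have hdet : (Polynomial.aeval A B'.charpoly).det = 0 := by
      by_contra hd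
      set M := Polynomial.aeval A B'.charpoly with hM
      have hinv : M * M⁻¹ = 1 := Matrix.mul_nonsing_inv M (isUnit_iff_ne_zero.mpr hd)
      apply hY0
      calc Y = Y * (M * M⁻¹) := by rw [hinv, Matrix.mul_one]
        _ = (Y * M) * M⁻¹ := by rw [Matrix.mul_assoc]
        _ = 0 := by rw [hchar, Matrix.zero_mul]
    have hsplit := Polynomial.Splits.eq_prod_roots_of_monic
      (IsAlgClosed.splits B'.charpoly) B'.charpoly_monic
    set L : List ℂ := B'.charpoly.roots.toList with hL
    have hLroots : (L : Multiset ℂ) = B'.charpoly.roots := Multiset.coe_toList _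
    have haeval : Polynomial.aeval A B'.charpoly =
        (L.map fun r => A - r • (1 : Matrix (Fin n) (Fin n) ℂ)).prod := by
      conv_lhs => rw [hsplit, ← hLroots]
      rw [Multiset.map_coe, Multiset.prod_coe, map_list_prod, List.map_map]
      congr 1
      apply List.map_congr_left
      intro r _
      simp [Algebra.algebraMap_eq_smul_one]
    have hprod : (L.map
        fun r => (A - r • (1 : Matrix (Fin n) (Fin n) ℂ)).det).prod = 0 := by
      have h4 := map_list_prod (Matrix.detMonoidHom)
        (L.map fun r => A - r • (1 : Matrix (Fin n) (Fin n) ℂ))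
      rw [List.map_map, ← haeval] at h4
      simpa [Matrix.coe_detMonoidHom, Function.comp, hdet] using h4.symm
    obtain ⟨r, hr, hr0⟩ := List.exists_of_mem_map
      (List.prod_eq_zero_iff.mp hprod)
    have hrroot : r ∈ B'.charpoly.roots := by rw [← hLroots]; exact_mod_cast hr
    refine ⟨r, ?_, r - ν, ?_, by ring⟩
    · rw [my_mem_spectrum_iff]
      have h2 : r • (1 : Matrix (Fin n) (Fin n) ℂ) - A = -(A - r • 1) := (neg_sub _ _).symm
      rw [h2, Matrix.det_neg, hr0, mul_zero]
    · rw [my_mem_spectrum_iff]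
      have hroot : B'.charpoly.IsRoot r := Polynomial.isRoot_of_mem_roots hrroot
      have h3 := my_eval_charpoly B' r
      rw [show B'.charpoly.eval r = 0 from hroot] at h3
      have heq : (r - ν) • (1 : Matrix (Fin m) (Fin m) ℂ) - B =
          r • (1 : Matrix (Fin m) (Fin m) ℂ) - B' := by
        rw [hB', sub_smul, sub_sub]
      rw [heq, ← h3]
  · rintro ⟨lam, hlam, μ, hμ, rfl⟩
    rw [my_mem_spectrum_iff] at hlam hμ
    have hlam' : (A - lam • (1 : Matrix (Fin n) (Fin n) ℂ)).det = 0 := by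
      have : A - lam • (1 : Matrix (Fin n) (Fin n) ℂ) = -(lam • 1 - A) := (neg_sub _ _).symm
      rw [this, Matrix.det_neg, hlam, mul_zero]
    have hμ' : (B - μ • (1 : Matrix (Fin m) (Fin m) ℂ)).det = 0 := by
      have : B - μ • (1 : Matrix (Fin m) (Fin m) ℂ) = -(μ • 1 - B) := (neg_sub _ _).symm
      rw [this, Matrix.det_neg, hμ, mul_zero]
    obtain ⟨u, hu0, hu⟩ := Matrix.exists_vecMul_eq_zero_iff.mpr hlam'
    obtain ⟨w, hw0, hw⟩ := Matrix.exists_mulVec_eq_zero_iff.mpr hμ'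
    have huA : u ᵥ* A = lam • u := by
      rw [Matrix.vecMul_sub, sub_eq_zero] at hu
      rw [hu]
      ext j
      simp [Matrix.vecMul, dotProduct, Matrix.smul_apply, Matrix.one_apply,
        mul_ite, mul_comm]
    have hwB : B *ᵥ w = μ • w := by
      rw [Matrix.sub_mulVec, sub_eq_zero] at hw
      rw [hw, Matrix.smul_mulVec, Matrix.one_mulVec]
    set Y : Matrix (Fin m) (Fin n) ℂ := Matrix.vecMulVec w u with hY
    have hYA : Y * A = lam • Y := by
      ext i j
      have : (u ᵥ* A) j = lam * u j := by rw [huA]; simp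
      simp only [hY, Matrix.mul_apply, Matrix.vecMulVec_apply, Matrix.smul_apply,
        smul_eq_mul]
      calc ∑ k, w i * u k * A k j = w i * ∑ k, u k * A k j := by
            rw [Finset.mul_sum]; simp_rw [mul_assoc]
        _ = w i * (lam * u j) := by
            rw [← this]; simp [Matrix.vecMul, dotProduct]
        _ = lam * (w i * u j) := by ring
    have hBY : B * Y = μ • Y := by
      ext i j
      have : (B *ᵥ w) i = μ * w i := by rw [hwB]; simp
      simp only [hY, Matrix.mul_apply, Matrix.vecMulVec_apply, Matrix.smul_apply,
        smul_eq_mul]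
      calc ∑ k, B i k * (w k * u j) = (∑ k, B i k * w k) * u j := by
            rw [Finset.sum_mul]; simp_rw [mul_assoc]
        _ = (μ * w i) * u j := by
            rw [← this]; simp [Matrix.mulVec, dotProduct]
        _ = μ * (w i * u j) := by ring
    have hYne : Y ≠ 0 := by
      obtain ⟨i, hi⟩ := Function.ne_iff.mp hw0
      obtain ⟨j, hj⟩ := Function.ne_iff.mp hu0
      intro h
      have := congrFun (congrFun h i) j
      simp only [hY, Matrix.vecMulVec_apply, Matrix.zero_apply] at this
      exact (mul_ne_zero hi hj) this
    refine Module.End.hasEigenvalue_of_hasEigenvector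
      ⟨Module.End.mem_eigenspace_iff.mpr ?_, hYne⟩
    show Y * A - B * Y = (lam - μ) • Y
    rw [hYA, hBY, sub_smul]

/-- For `n, m ≥ 1`, `ν` is an eigenvalue of the Sylvester operator `S_{A,B}`
iff `ν = λ - μ` for some `λ ∈ σ(A)`, `μ ∈ σ(B)`; i.e. `σ(S_{A,B}) = σ(A) - σ(B)`. -/
theorem spectrum_sylvesterOp {n m : ℕ} (hn : 0 < n) (hm : 0 < m)
    (A : Matrix (Fin n) (Fin n) ℂ) (B : Matrix (Fin m) (Fin m) ℂ) :
    (∀ ν : ℂ, Module.End.HasEigenvalue (sylvesterOp A B) ν ↔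
        ∃ lam ∈ spectrum ℂ A, ∃ μ ∈ spectrum ℂ B, ν = lam - μ) ∧
      spectrum ℂ (sylvesterOp A B) = spectrum ℂ A - spectrum ℂ B := by
  refine ⟨spectrum_sylvesterOp_aux A B, ?_⟩
  ext ν
  rw [← Module.End.hasEigenvalue_iff_mem_spectrum, spectrum_sylvesterOp_aux A B ν,
    Set.mem_sub]
  constructor
  · rintro ⟨l, hl, μ, hμ, rfl⟩; exact ⟨l, hl, μ, hμ, rfl⟩
  · rintro ⟨l, hl, μ, hμ, rfl⟩; exact ⟨l, hl, μ, hμ, rfl⟩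
end

section
/- Let α, c ∈ ℝ with α > c > 0, and let x ∈ [α − c, α + c]. Set t = (x − α)/c, z = −α/c + √((α/c)² − 1), and S₀ = 1/√(α² − c²). Then z ∈ (−1, 0), the series S₀·T₀(t) + 2·S₀·Σ_{k=1}^{∞} z^k · T_k(t) converges absolutely, and its sum equals 1/x, where T_k denotes the k-th Chebyshev polynomial of the first kind. -/
set_option maxHeartbeats 1000000


/-- For `α > c > 0` and `x ∈ [α - c, α + c]`, with `t = (x - α)/c`,
`z = -α/c + √((α/c)² - 1)` and `S₀ = 1/√(α² - c²)`, we have `z ∈ (-1, 0)`, the Chebyshev series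
`S₀·T₀(t) + 2S₀·Σ_{k≥1} z^k T_k(t)` converges absolutely, and its sum is `1/x`. -/
theorem chebyshev_series_inverse (α c x : ℝ) (hc : 0 < c) (hαc : c < α)
    (hx : x ∈ Set.Icc (α - c) (α + c))
    (t z S₀ : ℝ)
    (ht : t = (x - α) / c)
    (hz : z = -(α / c) + Real.sqrt ((α / c) ^ 2 - 1))
    (hS₀ : S₀ = 1 / Real.sqrt (α ^ 2 - c ^ 2)) :
    z ∈ Set.Ioo (-1 : ℝ) 0 ∧
      Summable (fun k : ℕ =>
        |(if k = 0 then S₀ else 2 * S₀ * z ^ k) *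
          (Polynomial.Chebyshev.T ℝ (k : ℤ)).eval t|) ∧
      HasSum (fun k : ℕ =>
        (if k = 0 then S₀ else 2 * S₀ * z ^ k) *
          (Polynomial.Chebyshev.T ℝ (k : ℤ)).eval t) (1 / x) := by
  obtain ⟨hx1, hx2⟩ := hx
  have hα : 0 < α := lt_trans hc hαc
  set d : ℝ := Real.sqrt (α ^ 2 - c ^ 2) with hd
  have hd2 : d ^ 2 = α ^ 2 - c ^ 2 := Real.sq_sqrt (by nlinarith)
  have hd0 : 0 < d := Real.sqrt_pos.2 (by nlinarith)
  have hdα : d < α := by nlinarith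
  have hdac : α - c < d := by nlinarith
  -- rewrite z
  have hz' : z = (d - α) / c := by
    rw [hz, show (α / c) ^ 2 - 1 = (d / c) ^ 2 by field_simp; nlinarith,
      Real.sqrt_sq (le_of_lt (div_pos hd0 hc))]
    field_simp
    ring
  have hz0 : z < 0 := by rw [hz']; exact div_neg_of_neg_of_pos (by linarith) hc
  have hz1 : -1 < z := by
    rw [hz', lt_div_iff₀ hc]; linarith
  have hzabs : |z| < 1 := abs_lt.2 ⟨hz1, hz0.trans one_pos⟩
  -- t in [-1,1]
  have ht1 : -1 ≤ t := by rw [ht, le_div_iff₀ hc]; linarith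
  have ht2 : t ≤ 1 := by rw [ht, div_le_iff₀ hc]; linarith
  -- theta
  set θ := Real.arccos t with hθ
  have hcosθ : Real.cos θ = t := Real.cos_arccos ht1 ht2
  have hsinθ : Real.sin θ ^ 2 = 1 - t ^ 2 := by
    rw [hθ, Real.sin_arccos, Real.sq_sqrt (by nlinarith)]
  have hT : ∀ k : ℕ, (Polynomial.Chebyshev.T ℝ (k : ℤ)).eval t = Real.cos (k * θ) := by
    intro k
    rw [← hcosθ, Polynomial.Chebyshev.T_real_cos]
    norm_num
  refine ⟨⟨hz1, hz0⟩, ?_, ?_⟩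
  -- summability
  · refine Summable.of_nonneg_of_le (fun k => abs_nonneg _) (fun k => ?_)
      ((summable_geometric_of_lt_one (abs_nonneg z) hzabs).mul_left (2 * |S₀|))
    · rw [abs_mul, hT k]
      have hc1 : |Real.cos (k * θ)| ≤ 1 := Real.abs_cos_le_one _
      have hnn : (0:ℝ) ≤ |if k = 0 then S₀ else 2 * S₀ * z ^ k| := abs_nonneg _
      have h2 : |if k = 0 then S₀ else 2 * S₀ * z ^ k| ≤ 2 * |S₀| * |z| ^ k := by
        by_cases hk : k = 0
        · rw [if_pos hk, hk, pow_zero, mul_one]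
          nlinarith [abs_nonneg S₀]
        · rw [if_neg hk, abs_mul, abs_mul, abs_pow, abs_two]
      calc |if k = 0 then S₀ else 2 * S₀ * z ^ k| * |Real.cos (k * θ)|
          ≤ |if k = 0 then S₀ else 2 * S₀ * z ^ k| * 1 :=
            mul_le_mul_of_nonneg_left hc1 hnn
        _ ≤ 2 * |S₀| * |z| ^ k := by rw [mul_one]; exact h2
  -- HasSum
  · have hx0 : 0 < x := by linarith
    set u : ℂ := (z : ℂ) * Complex.exp (θ * Complex.I) with hu
    have hun : ‖u‖ < 1 := by
      rw [hu, norm_mul]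
      have : ‖Complex.exp (θ * Complex.I)‖ = 1 := by
        rw [Complex.norm_exp_ofReal_mul_I]
      rw [this, mul_one, Complex.norm_real, Real.norm_eq_abs]
      exact hzabs
    have hgeo := hasSum_geometric_of_norm_lt_one hun
    have hre := Complex.hasSum_re hgeo
    have hterm : ∀ n : ℕ, (u ^ n).re = z ^ n * Real.cos (n * θ) := by
      intro n
      rw [hu, mul_pow, ← Complex.ofReal_pow, Complex.re_ofReal_mul,
        ← Complex.exp_nat_mul,
        show (n : ℂ) * ((θ : ℂ) * Complex.I) = ((n * θ : ℝ) : ℂ) * Complex.I by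
          push_cast; ring,
        Complex.exp_ofReal_mul_I_re]
    simp only [hterm] at hre
    -- compute the real part of (1-u)⁻¹
    set D : ℝ := 1 - 2 * z * t + z ^ 2 with hDdef
    have hzt : z * t ≤ |z| := (le_abs_self _).trans (by
      rw [abs_mul]
      calc |z| * |t| ≤ |z| * 1 := by
            exact mul_le_mul_of_nonneg_left (abs_le.2 ⟨ht1, ht2⟩) (abs_nonneg z)
        _ = |z| := mul_one _)
    have hD0 : 0 < D := by
      rw [hDdef]
      nlinarith [sq_nonneg (1 - |z|), sq_abs z]
    have hu_re : u.re = z * t := by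
      rw [hu, Complex.re_ofReal_mul, Complex.exp_ofReal_mul_I_re, hcosθ]
    have hu_im : u.im = z * Real.sin θ := by
      rw [hu, Complex.im_ofReal_mul, Complex.exp_ofReal_mul_I_im]
    have hns : Complex.normSq (1 - u) = D := by
      rw [Complex.normSq_apply, Complex.sub_re, Complex.sub_im, Complex.one_re,
        Complex.one_im, hu_re, hu_im, hDdef]
      linear_combination (z ^ 2) * hsinθ
    have hRe : ((1 - u)⁻¹).re = (1 - z * t) / D := by
      rw [Complex.inv_re, hns, Complex.sub_re, Complex.one_re, hu_re]
    rw [hRe] at hre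
    -- combine
    have h2 := (hre.mul_left (2 * S₀)).sub (hasSum_ite_eq (0 : ℕ) S₀)
    have hfun : ∀ k : ℕ,
        (if k = 0 then S₀ else 2 * S₀ * z ^ k) *
          (Polynomial.Chebyshev.T ℝ (k : ℤ)).eval t
        = 2 * S₀ * (z ^ k * Real.cos (k * θ)) - (if k = 0 then S₀ else 0) := by
      intro k
      rw [hT k]
      by_cases hk : k = 0
      · subst hk; simp; ring
      · rw [if_neg hk, if_neg hk]; ring
    have hval : 2 * S₀ * ((1 - z * t) / D) - S₀ = 1 / x := by
      have hxval : x = α + c * t := by rw [ht]; field_simp; ring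
      have hzc : z * c = d - α := by rw [hz']; field_simp
      have hkey : (1 - z ^ 2) * x = d * D := by
        have h : c ^ 2 * ((1 - z ^ 2) * x) = c ^ 2 * (d * D) := by
          rw [hDdef, hxval]
          linear_combination ((-(α + c * t + d)) * (z * c + d - α) + 2 * c * d * t) * hzc +
            (α + c * t - d) * hd2
        exact mul_left_cancel₀ (pow_ne_zero 2 hc.ne') h
      have e : 2 * S₀ * ((1 - z * t) / D) - S₀ - 1 / x
          = (S₀ / (D * x)) * ((2 * (1 - z * t) - D) * x - d * D) := by
        have := hd0.ne'; have := hD0.ne'; have := hx0.ne'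
        rw [hS₀]; field_simp
      have e0 : (2 * (1 - z * t) - D) * x - d * D = 0 := by
        linear_combination hkey - x * hDdef
      rw [e0, mul_zero] at e
      linarith
    rw [← hval]
    have hfe := funext hfun
    rw [hfe]
    exact h2
end

section
/- Let β ∈ (0, 1) and Σ_β = [−1, −β] ∪ [β, 1], with weight w_β(x) = (1/π)·√|x + β| / (√(1 − x²)·√|x − β|) for x in the interior of Σ_β. Define polynomials (p_j)_{j≥0} by p_0 = 1, p_1(x) = (x − a_0)/b_0, and p_{k+1}(x) = (x·p_k(x) − a_k·p_k(x) − b_{k−1}·p_{k−1}(x))/b_k for k ≥ 1, where a_k = (−1)^k·β for all k ≥ 0, b_0 = √((1 − β²)/2), and b_k = √(1 − β²)/2 for k ≥ 1. Then these polynomials are orthonormal with respect to w_β: for all j, k ≥ 0, ∫_{Σ_β} p_j(x)·p_k(x)·w_β(x) dx = δ_{jk} (in particular ∫_{Σ_β} w_β(x) dx = 1). -/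
open Real MeasureTheory intervalIntegral Set

noncomputable def AkhRR : ℕ → ℝ → ℝ
  | 0, _ => 1
  | n+1, θ => 2 * Real.cos ((n+1) * θ) - AkhRR n θ

lemma AkhRR_continuous (n : ℕ) : Continuous (AkhRR n) := by
  induction n with
  | zero => simpa [AkhRR] using continuous_const
  | succ n ih =>
    simp only [AkhRR]
    exact (continuous_const.mul (Real.continuous_cos.comp (continuous_const.mul continuous_id))).sub ih

lemma two_cos_mul_cos (a b : ℝ) :
    2 * Real.cos a * Real.cos b = Real.cos (a + b) + Real.cos (a - b) := by
  have h1 := Real.cos_add a b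
  have h2 := Real.cos_sub a b
  linarith

-- (I1)
lemma AkhRR_one_add_cos (n : ℕ) (θ : ℝ) :
    (1 + Real.cos θ) * AkhRR n θ = Real.cos ((n+1) * θ) + Real.cos (n * θ) := by
  induction n with
  | zero => simp [AkhRR]; ring_nf
  | succ n ih =>
    have key := two_cos_mul_cos ((n+1) * θ) θ
    have e1 : ((n:ℝ)+1) * θ + θ = ((n:ℝ)+1+1) * θ := by ring
    have e2 : ((n:ℝ)+1) * θ - θ = (n:ℝ) * θ := by ring
    rw [e1, e2] at key
    simp only [AkhRR]
    push_cast
    push_cast at ih key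
    nlinarith [key, ih]

-- (I2)
lemma AkhRR_cos_half (n : ℕ) (θ : ℝ) :
    Real.cos (θ/2) * AkhRR n θ = Real.cos ((n + 1/2) * θ) := by
  induction n with
  | zero => simp [AkhRR]; ring_nf
  | succ n ih =>
    have key := two_cos_mul_cos ((n+1) * θ) (θ/2)
    have e1 : ((n:ℝ)+1) * θ + θ/2 = ((n:ℝ)+1+1/2) * θ := by ring
    have e2 : ((n:ℝ)+1) * θ - θ/2 = ((n:ℝ)+1/2) * θ := by ring
    rw [e1, e2] at key
    simp only [AkhRR]
    push_cast
    push_cast at ih key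
    nlinarith [key, ih]

lemma int_cos_ne (c : ℝ) (hc : c ≠ 0) :
    ∫ θ in (0:ℝ)..π, Real.cos (c * θ) = Real.sin (c * π) / c := by
  rw [intervalIntegral.integral_comp_mul_left (fun x => Real.cos x) hc]
  simp [integral_cos, div_eq_inv_mul]

lemma akh_intervalIntegrable (c : ℝ) :
    IntervalIntegrable (fun θ => Real.cos (c*θ)) volume 0 π :=
  (Real.continuous_cos.comp (continuous_const.mul continuous_id)).intervalIntegrable 0 π

lemma int_cos_cast (c : ℝ) (hs : Real.sin (c * π) = 0) :
    ∫ θ in (0:ℝ)..π, Real.cos (c * θ) = if c = 0 then π else 0 := by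
  by_cases hc : c = 0
  · simp [hc, Real.pi_pos.le]
  · rw [int_cos_ne c hc, hs]; simp [hc]

lemma int_cos_natz (k : ℕ) (hk : k ≠ 0) : ∫ θ in (0:ℝ)..π, Real.cos (k * θ) = 0 := by
  rw [int_cos_cast _ (by simpa using Real.sin_nat_mul_pi k)]
  simp [Nat.cast_ne_zero.mpr hk]

lemma sin_nat_sub_pi (m n : ℕ) : Real.sin (((m:ℝ) - n) * π) = 0 := by
  have : ((m:ℝ) - n) * π = (m:ℝ) * π - (n:ℝ) * π := by ring
  rw [this, Real.sin_sub, Real.sin_nat_mul_pi, Real.sin_nat_mul_pi]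
  ring

lemma sin_nat_add_pi (m n : ℕ) : Real.sin (((m:ℝ) + n) * π) = 0 := by
  have : ((m:ℝ) + n) * π = ((m+n : ℕ):ℝ) * π := by push_cast; ring
  rw [this, Real.sin_nat_mul_pi]

lemma orth_cos (m n : ℕ) :
    ∫ θ in (0:ℝ)..π, Real.cos (m * θ) * Real.cos (n * θ) =
      if m = n then (if m = 0 then π else π/2) else 0 := by
  have hi : (fun θ : ℝ => Real.cos (m*θ) * Real.cos (n*θ))
      = fun θ => (Real.cos (((m:ℝ)+n) * θ) + Real.cos (((m:ℝ)-n) * θ))/2 := by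
    funext θ
    have key := two_cos_mul_cos ((m:ℝ)*θ) ((n:ℝ)*θ)
    have e1 : (m:ℝ)*θ + n*θ = ((m:ℝ)+n)*θ := by ring
    have e2 : (m:ℝ)*θ - n*θ = ((m:ℝ)-n)*θ := by ring
    rw [e1, e2] at key; linarith
  rw [hi]
  rw [intervalIntegral.integral_div, intervalIntegral.integral_add (akh_intervalIntegrable _) (akh_intervalIntegrable _)]
  rw [int_cos_cast _ (sin_nat_add_pi m n), int_cos_cast _ (sin_nat_sub_pi m n)]
  by_cases hmn : m = n
  · subst hmn
    by_cases hm : m = 0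
    · subst hm; norm_num
    · have h1 : ((m:ℝ) + m) ≠ 0 := by
        have : (0:ℝ) < m := by exact_mod_cast Nat.pos_of_ne_zero hm
        linarith
      simp [h1, hm]
  · have h2 : ((m:ℝ) - n) ≠ 0 := by
      simp only [sub_ne_zero]; exact_mod_cast hmn
    have h1 : ((m:ℝ) + n) ≠ 0 := by
      intro h
      have hm0 : (m:ℝ) = 0 ∧ (n:ℝ) = 0 := by
        constructor <;> nlinarith [Nat.cast_nonneg (α := ℝ) m, Nat.cast_nonneg (α := ℝ) n]
      apply h2
      rw [hm0.1, hm0.2]; ring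
    simp [h1, h2, hmn]

lemma orth_cos_half (m n : ℕ) :
    ∫ θ in (0:ℝ)..π, Real.cos (((m:ℝ) + 1/2) * θ) * Real.cos (((n:ℝ) + 1/2) * θ) =
      if m = n then π/2 else 0 := by
  have hi : (fun θ : ℝ => Real.cos (((m:ℝ)+1/2)*θ) * Real.cos (((n:ℝ)+1/2)*θ))
      = fun θ => (Real.cos (((m:ℝ)+n+1) * θ) + Real.cos (((m:ℝ)-n) * θ))/2 := by
    funext θ
    have key := two_cos_mul_cos (((m:ℝ)+1/2)*θ) (((n:ℝ)+1/2)*θ)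
    have e1 : ((m:ℝ)+1/2)*θ + ((n:ℝ)+1/2)*θ = ((m:ℝ)+n+1)*θ := by ring
    have e2 : ((m:ℝ)+1/2)*θ - ((n:ℝ)+1/2)*θ = ((m:ℝ)-n)*θ := by ring
    rw [e1, e2] at key; linarith
  rw [hi]
  rw [intervalIntegral.integral_div, intervalIntegral.integral_add (akh_intervalIntegrable _) (akh_intervalIntegrable _)]
  have hs1 : Real.sin (((m:ℝ)+n+1) * π) = 0 := by
    have : ((m:ℝ) + n + 1) = (((m+n+1 : ℕ)):ℝ) := by push_cast; ring
    rw [this, Real.sin_nat_mul_pi]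
  have h1 : ((m:ℝ)+n+1) ≠ 0 := by positivity
  rw [int_cos_cast _ hs1, int_cos_cast _ (sin_nat_sub_pi m n)]
  by_cases hmn : m = n
  · subst hmn; simp [h1]
  · have h2 : ((m:ℝ) - n) ≠ 0 := by
      simp only [sub_ne_zero]; exact_mod_cast hmn
    simp [h1, h2, hmn]

noncomputable def akhG (β θ : ℝ) : ℝ := Real.sqrt ((1 + β^2 + (1 - β^2) * Real.cos θ)/2)

section G
variable {β : ℝ} (h0 : 0 < β) (h1 : β < 1)

include h0 h1 in
lemma akhQ_lb (θ : ℝ) : β^2 ≤ (1 + β^2 + (1 - β^2) * Real.cos θ)/2 := by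
  nlinarith [Real.neg_one_le_cos θ, sq_nonneg β, Real.cos_le_one θ,
    mul_nonneg (by nlinarith [sq_nonneg β, h0.le] : (0:ℝ) ≤ 1 - β^2) (by nlinarith [Real.neg_one_le_cos θ] : (0:ℝ) ≤ 1 + Real.cos θ)]

include h0 h1 in
lemma akhQ_ub (θ : ℝ) : (1 + β^2 + (1 - β^2) * Real.cos θ)/2 ≤ 1 := by
  nlinarith [Real.cos_le_one θ, sq_nonneg β,
    mul_nonneg (by nlinarith [sq_nonneg β, h0.le] : (0:ℝ) ≤ 1 - β^2) (by nlinarith [Real.cos_le_one θ] : (0:ℝ) ≤ 1 - Real.cos θ)]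

include h0 h1 in
lemma akhQ_pos (θ : ℝ) : 0 < (1 + β^2 + (1 - β^2) * Real.cos θ)/2 :=
  lt_of_lt_of_le (by positivity) (akhQ_lb h0 h1 θ)

include h0 h1 in
lemma akhG_sq (θ : ℝ) : (akhG β θ)^2 = (1 + β^2 + (1 - β^2) * Real.cos θ)/2 :=
  Real.sq_sqrt (akhQ_pos h0 h1 θ).le

include h0 h1 in
lemma akhG_pos (θ : ℝ) : 0 < akhG β θ := Real.sqrt_pos.mpr (akhQ_pos h0 h1 θ)

include h0 h1 in
lemma akhG_lb (θ : ℝ) : β ≤ akhG β θ := by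
  have := Real.sqrt_le_sqrt (akhQ_lb h0 h1 (β := β) θ)
  rwa [Real.sqrt_sq h0.le] at this

include h0 h1 in
lemma akhG_ub (θ : ℝ) : akhG β θ ≤ 1 := by
  have := Real.sqrt_le_sqrt (akhQ_ub h0 h1 (β := β) θ)
  rwa [Real.sqrt_one] at this

lemma akhG_continuous : Continuous (akhG β) := by
  apply Real.continuous_sqrt.comp
  fun_prop

lemma akhG_zero : akhG β 0 = 1 := by
  simp only [akhG, Real.cos_zero, mul_one]
  rw [show (1 + β^2 + (1 - β^2))/2 = 1 by ring, Real.sqrt_one]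

include h0 in
lemma akhG_pi : akhG β π = β := by
  simp only [akhG, Real.cos_pi, mul_neg_one]
  rw [show (1 + β^2 + -(1 - β^2))/2 = β^2 by ring, Real.sqrt_sq h0.le]

include h0 h1 in
lemma akhG_strict {θ : ℝ} (hθ : θ ∈ Set.Ioo 0 π) : akhG β θ ∈ Set.Ioo β 1 := by
  have hc1 : Real.cos θ < 1 := by
    have := Real.strictAntiOn_cos (Set.left_mem_Icc.mpr Real.pi_pos.le)
      ⟨hθ.1.le, hθ.2.le⟩ hθ.1
    simpa using this
  have hc2 : -1 < Real.cos θ := by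
    have := Real.strictAntiOn_cos ⟨hθ.1.le, hθ.2.le⟩
      (Set.right_mem_Icc.mpr Real.pi_pos.le) hθ.2
    simpa using this
  constructor
  · have hq : β^2 < (1 + β^2 + (1 - β^2) * Real.cos θ)/2 := by
      nlinarith [mul_pos (by nlinarith : (0:ℝ) < 1 - β^2) (by nlinarith : (0:ℝ) < 1 + Real.cos θ)]
    have := Real.sqrt_lt_sqrt (by positivity) hq
    rwa [Real.sqrt_sq h0.le] at this
  · have hq : (1 + β^2 + (1 - β^2) * Real.cos θ)/2 < 1 := by
      nlinarith [mul_pos (by nlinarith : (0:ℝ) < 1 - β^2) (by nlinarith : (0:ℝ) < 1 - Real.cos θ)]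
    have := Real.sqrt_lt_sqrt (akhQ_pos h0 h1 θ).le hq
    rwa [Real.sqrt_one] at this

include h0 h1 in
lemma akhG_anti : StrictAntiOn (akhG β) (Set.Icc 0 π) := by
  intro x hx y hy hxy
  have hc : Real.cos y < Real.cos x := Real.strictAntiOn_cos hx hy hxy
  apply Real.sqrt_lt_sqrt (akhQ_pos h0 h1 y).le
  nlinarith [mul_pos (by nlinarith : (0:ℝ) < 1 - β^2) (by nlinarith : (0:ℝ) < Real.cos x - Real.cos y)]

include h0 h1 in
lemma akhG_inj : Set.InjOn (akhG β) (Set.Ioo 0 π) :=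
  ((akhG_anti h0 h1).injOn).mono Set.Ioo_subset_Icc_self

include h0 h1 in
lemma akhG_image : akhG β '' Set.Ioo 0 π = Set.Ioo β 1 := by
  apply Set.Subset.antisymm
  · rintro x ⟨θ, hθ, rfl⟩
    exact akhG_strict h0 h1 hθ
  · have := intermediate_value_Ioo' Real.pi_pos.le (akhG_continuous (β := β)).continuousOn
    rwa [akhG_zero, akhG_pi h0] at this

include h0 h1 in
lemma akhG_hasDerivAt (θ : ℝ) :
    HasDerivAt (akhG β) (-((1 - β^2) * Real.sin θ) / (4 * akhG β θ)) θ := by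
  have hq : HasDerivAt (fun θ => (1 + β^2 + (1 - β^2) * Real.cos θ)/2)
      ((1 - β^2) * (-Real.sin θ) / 2) θ := by
    have := ((Real.hasDerivAt_cos θ).const_mul (1 - β^2)).const_add (1 + β^2)
    exact this.div_const 2
  have hs := (Real.hasDerivAt_sqrt (ne_of_gt (akhQ_pos h0 h1 θ))).comp θ hq
  convert hs using 1
  · rfl
  · rfl
  · rfl
  rw [show Real.sqrt ((1 + β^2 + (1 - β^2) * Real.cos θ)/2) = akhG β θ from rfl]
  field_simp
  ring

end G

section Subst
variable {β : ℝ} (h0 : 0 < β) (h1 : β < 1)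

include h0 h1 in
lemma akh_subst_pos (f : ℝ → ℝ) :
    ∫ x in Set.Ioo β 1, f x
      = ∫ θ in Set.Ioo 0 π, |(-((1 - β^2) * Real.sin θ) / (4 * akhG β θ))| * f (akhG β θ) := by
  rw [← akhG_image h0 h1]
  simpa using MeasureTheory.integral_image_eq_integral_abs_deriv_smul measurableSet_Ioo
    (fun θ _ => (akhG_hasDerivAt h0 h1 θ).hasDerivWithinAt) (akhG_inj h0 h1) f

include h0 h1 in
lemma akh_subst_pos_int (f : ℝ → ℝ) :
    MeasureTheory.IntegrableOn f (Set.Ioo β 1) ↔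
      MeasureTheory.IntegrableOn
        (fun θ => |(-((1 - β^2) * Real.sin θ) / (4 * akhG β θ))| * f (akhG β θ))
        (Set.Ioo 0 π) := by
  rw [← akhG_image h0 h1]
  simpa using MeasureTheory.integrableOn_image_iff_integrableOn_abs_deriv_smul measurableSet_Ioo
    (fun θ _ => (akhG_hasDerivAt h0 h1 θ).hasDerivWithinAt) (akhG_inj h0 h1) f

include h0 h1 in
lemma akh_neg_hasDerivAt (θ : ℝ) :
    HasDerivAt (fun θ => -akhG β θ) ((1 - β^2) * Real.sin θ / (4 * akhG β θ)) θ := by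
  have := (akhG_hasDerivAt h0 h1 θ).neg
  convert this using 1
  · rfl
  · rfl
  · rfl
  ring

include h0 h1 in
lemma akh_neg_image : (fun θ => -akhG β θ) '' Set.Ioo 0 π = Set.Ioo (-1) (-β) := by
  have : (fun θ => -akhG β θ) = (Neg.neg ∘ akhG β) := rfl
  rw [this, Set.image_comp, akhG_image h0 h1, Set.image_neg_Ioo]

include h0 h1 in
lemma akh_neg_inj : Set.InjOn (fun θ => -akhG β θ) (Set.Ioo 0 π) := by
  intro x hx y hy hxy
  exact akhG_inj h0 h1 hx hy (by linarith [neg_injective hxy])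

include h0 h1 in
lemma akh_subst_neg (f : ℝ → ℝ) :
    ∫ x in Set.Ioo (-1:ℝ) (-β), f x
      = ∫ θ in Set.Ioo 0 π, |(1 - β^2) * Real.sin θ / (4 * akhG β θ)| * f (-akhG β θ) := by
  rw [← akh_neg_image h0 h1]
  simpa using MeasureTheory.integral_image_eq_integral_abs_deriv_smul measurableSet_Ioo
    (fun θ _ => (akh_neg_hasDerivAt h0 h1 θ).hasDerivWithinAt) (akh_neg_inj h0 h1) f

include h0 h1 in
lemma akh_subst_neg_int (f : ℝ → ℝ) :
    MeasureTheory.IntegrableOn f (Set.Ioo (-1:ℝ) (-β)) ↔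
      MeasureTheory.IntegrableOn
        (fun θ => |(1 - β^2) * Real.sin θ / (4 * akhG β θ)| * f (-akhG β θ))
        (Set.Ioo 0 π) := by
  rw [← akh_neg_image h0 h1]
  simpa using MeasureTheory.integrableOn_image_iff_integrableOn_abs_deriv_smul measurableSet_Ioo
    (fun θ _ => (akh_neg_hasDerivAt h0 h1 θ).hasDerivWithinAt) (akh_neg_inj h0 h1) f

end Subst

noncomputable def akhW (β x : ℝ) : ℝ :=
  (1 / Real.pi) * Real.sqrt |x + β| / (Real.sqrt (1 - x ^ 2) * Real.sqrt |x - β|)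

section Weight
variable {β : ℝ} (h0 : 0 < β) (h1 : β < 1)

include h0 h1 in
lemma akh_sqrt_prod {θ : ℝ} (hθ : θ ∈ Set.Ioo 0 π) :
    Real.sqrt (1 - (akhG β θ)^2) * Real.sqrt (akhG β θ - β) * Real.sqrt (akhG β θ + β)
      = (1-β^2)/2 * Real.sin θ := by
  have hx1 : β < akhG β θ := (akhG_strict h0 h1 hθ).1
  have hx2 : akhG β θ < 1 := (akhG_strict h0 h1 hθ).2
  have hsθ : 0 < Real.sin θ := Real.sin_pos_of_pos_of_lt_pi hθ.1 hθ.2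
  have e1 : 1 - (akhG β θ)^2 = (1-β^2)*(1 - Real.cos θ)/2 := by rw [akhG_sq h0 h1]; ring
  have e2 : (akhG β θ)^2 - β^2 = (1-β^2)*(1 + Real.cos θ)/2 := by rw [akhG_sq h0 h1]; ring
  rw [← Real.sqrt_mul (by nlinarith : (0:ℝ) ≤ 1 - (akhG β θ)^2),
    ← Real.sqrt_mul (mul_nonneg (by nlinarith) (by linarith))]
  have key : (1 - (akhG β θ)^2) * (akhG β θ - β) * (akhG β θ + β)
      = ((1-β^2)/2 * Real.sin θ)^2 := by
    have hs := Real.sin_sq_add_cos_sq θ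
    have e3 : (1 - (akhG β θ)^2) * (akhG β θ - β) * (akhG β θ + β)
        = (1 - (akhG β θ)^2) * ((akhG β θ)^2 - β^2) := by ring
    rw [e3, e1, e2]
    linear_combination (-((1 - β^2)/2)^2) * hs
  rw [key, Real.sqrt_sq (le_of_lt (mul_pos (show (0:ℝ) < (1-β^2)/2 by nlinarith) hsθ))]

include h0 h1 in
lemma akh_weight_core {x sθ : ℝ} (hb : β < x) (hx1 : x < 1) (hs : 0 < sθ)
    (hA : Real.sqrt (1-x^2) * Real.sqrt (x-β) * Real.sqrt (x+β) = (1-β^2)/2 * sθ) :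
    ((1-β^2) * sθ/(4*x)) * akhW β x = (x+β)/(2*π*x) := by
  have hxpos : 0 < x := lt_trans h0 hb
  have h1x : (0:ℝ) < 1 - x^2 := by nlinarith
  have hπ : (0:ℝ) < π := Real.pi_pos
  have hb2 : (0:ℝ) < 1 - β^2 := by nlinarith
  have hW : akhW β x = (x+β) / (π * ((1-β^2)/2 * sθ)) := by
    unfold akhW
    rw [abs_of_pos (by linarith : (0:ℝ) < x+β), abs_of_pos (by linarith : (0:ℝ) < x-β)]
    rw [div_eq_div_iff
      (ne_of_gt (mul_pos (Real.sqrt_pos.mpr h1x) (Real.sqrt_pos.mpr (by linarith : (0:ℝ) < x - β))))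
      (by positivity)]
    rw [← hA]
    have hxb : Real.sqrt (x+β) * Real.sqrt (x+β) = x + β :=
      Real.mul_self_sqrt (by linarith)
    field_simp
    linear_combination (Real.sqrt (x-β)) * hxb
  rw [hW]
  field_simp
  ring

include h0 h1 in
lemma akh_weight_core_neg {x sθ : ℝ} (hb : β < x) (hx1 : x < 1) (hs : 0 < sθ)
    (hA : Real.sqrt (1-x^2) * Real.sqrt (x-β) * Real.sqrt (x+β) = (1-β^2)/2 * sθ) :
    ((1-β^2) * sθ/(4*x)) * akhW β (-x) = (x-β)/(2*π*x) := by
  have hxpos : 0 < x := lt_trans h0 hb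
  have h1x : (0:ℝ) < 1 - x^2 := by nlinarith
  have hπ : (0:ℝ) < π := Real.pi_pos
  have hb2 : (0:ℝ) < 1 - β^2 := by nlinarith
  have hW : akhW β (-x) = (x-β) / (π * ((1-β^2)/2 * sθ)) := by
    unfold akhW
    have ea : |-x + β| = x - β := by rw [abs_of_neg (by linarith : -x + β < 0)]; ring
    have eb : |-x - β| = x + β := by rw [abs_of_neg (by linarith : -x - β < 0)]; ring
    have ec : 1 - (-x)^2 = 1 - x^2 := by ring
    rw [ea, eb, ec]
    rw [div_eq_div_iff
      (ne_of_gt (mul_pos (Real.sqrt_pos.mpr h1x) (Real.sqrt_pos.mpr (by linarith : (0:ℝ) < x + β))))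
      (by positivity)]
    rw [← hA]
    have hxb : Real.sqrt (x-β) * Real.sqrt (x-β) = x - β :=
      Real.mul_self_sqrt (by linarith)
    field_simp
    linear_combination hxb
  rw [hW]
  field_simp
  ring

include h0 h1 in
lemma akh_weight_pos {θ : ℝ} (hθ : θ ∈ Set.Ioo 0 π) :
    |(-((1 - β^2) * Real.sin θ) / (4 * akhG β θ))| * akhW β (akhG β θ)
      = (akhG β θ + β) / (2 * π * akhG β θ) := by
  have hx1 : β < akhG β θ := (akhG_strict h0 h1 hθ).1
  have hx2 : akhG β θ < 1 := (akhG_strict h0 h1 hθ).2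
  have hxpos : 0 < akhG β θ := lt_trans h0 hx1
  have hsθ : 0 < Real.sin θ := Real.sin_pos_of_pos_of_lt_pi hθ.1 hθ.2
  have hb2 : (0:ℝ) < 1 - β^2 := by nlinarith
  have habs : |(-((1 - β^2) * Real.sin θ)) / (4 * akhG β θ)|
      = (1 - β^2) * Real.sin θ / (4 * akhG β θ) := by
    rw [abs_div, abs_neg, abs_of_pos (by positivity), abs_of_pos (by positivity)]
  rw [habs]
  exact akh_weight_core h0 h1 hx1 hx2 hsθ (akh_sqrt_prod h0 h1 hθ)

include h0 h1 in
lemma akh_weight_neg {θ : ℝ} (hθ : θ ∈ Set.Ioo 0 π) :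
    |(1 - β^2) * Real.sin θ / (4 * akhG β θ)| * akhW β (-akhG β θ)
      = (akhG β θ - β) / (2 * π * akhG β θ) := by
  have hx1 : β < akhG β θ := (akhG_strict h0 h1 hθ).1
  have hx2 : akhG β θ < 1 := (akhG_strict h0 h1 hθ).2
  have hxpos : 0 < akhG β θ := lt_trans h0 hx1
  have hsθ : 0 < Real.sin θ := Real.sin_pos_of_pos_of_lt_pi hθ.1 hθ.2
  have hb2 : (0:ℝ) < 1 - β^2 := by nlinarith
  have habs : |((1 - β^2) * Real.sin θ) / (4 * akhG β θ)|
      = (1 - β^2) * Real.sin θ / (4 * akhG β θ) := by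
    rw [abs_div, abs_of_pos (by positivity), abs_of_pos (by positivity)]
  rw [habs]
  exact akh_weight_core_neg h0 h1 hx1 hx2 hsθ (akh_sqrt_prod h0 h1 hθ)

end Weight

noncomputable def akhE (n : ℕ) (θ : ℝ) : ℝ := if n = 0 then 1 else Real.sqrt 2 * Real.cos (n * θ)

lemma akhE_continuous (n : ℕ) : Continuous (akhE n) := by
  unfold akhE
  split
  · exact continuous_const
  · fun_prop

section Final
variable {β : ℝ} (h0 : 0 < β) (h1 : β < 1)

include h0 h1 in
lemma akh_ratio_cont (s : ℝ) :
    Continuous (fun θ => (akhG β θ + s) / (2 * π * akhG β θ)) := by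
  apply Continuous.div ((akhG_continuous (β := β)).add continuous_const)
    (continuous_const.mul (akhG_continuous (β := β)))
  intro θ
  have := akhG_pos h0 h1 θ
  exact (mul_pos (mul_pos two_pos Real.pi_pos) this).ne'

include h0 h1 in
lemma akh_final_even_even (m n : ℕ) :
    (∫ θ in (0:ℝ)..π, akhE m θ * akhE n θ * ((akhG β θ + β) / (2 * π * akhG β θ)))
      + (∫ θ in (0:ℝ)..π, akhE m θ * akhE n θ * ((akhG β θ + -β) / (2 * π * akhG β θ)))
      = if m = n then 1 else 0 := by
  have hπ : (0:ℝ) < π := Real.pi_pos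
  have hcont : ∀ s : ℝ, IntervalIntegrable
      (fun θ => akhE m θ * akhE n θ * ((akhG β θ + s) / (2 * π * akhG β θ))) volume 0 π :=
    fun s => (((akhE_continuous m).mul (akhE_continuous n)).mul
      (akh_ratio_cont h0 h1 s)).intervalIntegrable 0 π
  rw [← intervalIntegral.integral_add (hcont β) (hcont (-β))]
  have heq : ∀ θ : ℝ, akhE m θ * akhE n θ * ((akhG β θ + β) / (2 * π * akhG β θ))
      + akhE m θ * akhE n θ * ((akhG β θ + -β) / (2 * π * akhG β θ))
      = akhE m θ * akhE n θ / π := by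
    intro θ
    have hg := akhG_pos h0 h1 θ
    field_simp
    ring
  rw [intervalIntegral.integral_congr (fun θ _ => heq θ)]
  by_cases hm : m = 0 <;> by_cases hn : n = 0
  · subst hm; subst hn
    simp [akhE, intervalIntegral.integral_div, hπ.ne']
  · subst hm
    have : ∀ θ : ℝ, akhE 0 θ * akhE n θ / π = (Real.sqrt 2 / π) * Real.cos (n * θ) := by
      intro θ; simp [akhE, hn]; ring
    rw [intervalIntegral.integral_congr (fun θ _ => this θ),
      intervalIntegral.integral_const_mul, int_cos_natz n hn]
    simp [Ne.symm hn]
  · subst hn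
    have : ∀ θ : ℝ, akhE m θ * akhE 0 θ / π = (Real.sqrt 2 / π) * Real.cos (m * θ) := by
      intro θ; simp [akhE, hm]; ring
    rw [intervalIntegral.integral_congr (fun θ _ => this θ),
      intervalIntegral.integral_const_mul, int_cos_natz m hm]
    simp [hm]
  · have : ∀ θ : ℝ, akhE m θ * akhE n θ / π = (2 / π) * (Real.cos (m * θ) * Real.cos (n * θ)) := by
      intro θ
      simp only [akhE, if_neg hm, if_neg hn]
      have h2 : Real.sqrt 2 * Real.sqrt 2 = 2 := Real.mul_self_sqrt (by norm_num)
      field_simp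
      linear_combination (Real.cos (m*θ) * Real.cos (θ*n)) * h2
    rw [intervalIntegral.integral_congr (fun θ _ => this θ),
      intervalIntegral.integral_const_mul, orth_cos m n]
    by_cases hmn : m = n
    · subst hmn; rw [if_pos rfl, if_pos rfl, if_neg hm]; field_simp
    · simp [hmn]
end Final

section Final2
variable {β : ℝ} (h0 : 0 < β) (h1 : β < 1)

include h0 h1 in
lemma akh_final_even_odd (m n : ℕ) (b0 : ℝ) :
    (∫ θ in (0:ℝ)..π,
        akhE m θ * ((akhG β θ - β) * AkhRR n θ / b0) * ((akhG β θ + β) / (2 * π * akhG β θ)))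
      + (∫ θ in (0:ℝ)..π,
        akhE m θ * (-((akhG β θ + β) * AkhRR n θ / b0)) * ((akhG β θ + -β) / (2 * π * akhG β θ)))
      = 0 := by
  have hcont1 : IntervalIntegrable
      (fun θ => akhE m θ * ((akhG β θ - β) * AkhRR n θ / b0) * ((akhG β θ + β) / (2 * π * akhG β θ)))
      volume 0 π := by
    apply Continuous.intervalIntegrable
    exact ((akhE_continuous m).mul ((((akhG_continuous.sub continuous_const).mul
      (AkhRR_continuous n)).div_const b0))).mul (akh_ratio_cont h0 h1 β)
  have hcont2 : IntervalIntegrable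
      (fun θ => akhE m θ * (-((akhG β θ + β) * AkhRR n θ / b0)) * ((akhG β θ + -β) / (2 * π * akhG β θ)))
      volume 0 π := by
    apply Continuous.intervalIntegrable
    exact ((akhE_continuous m).mul ((((akhG_continuous.add continuous_const).mul
      (AkhRR_continuous n)).div_const b0).neg)).mul (akh_ratio_cont h0 h1 (-β))
  rw [← intervalIntegral.integral_add hcont1 hcont2]
  have heq : ∀ θ : ℝ,
      akhE m θ * ((akhG β θ - β) * AkhRR n θ / b0) * ((akhG β θ + β) / (2 * π * akhG β θ))
      + akhE m θ * (-((akhG β θ + β) * AkhRR n θ / b0)) * ((akhG β θ + -β) / (2 * π * akhG β θ))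
      = 0 := by
    intro θ
    ring
  rw [intervalIntegral.integral_congr (fun θ _ => heq θ)]
  simp

include h0 h1 in
lemma akh_final_odd_odd (m n : ℕ) (b0 : ℝ) (hb0pos : 0 < b0) (hb0sq : b0^2 = (1 - β^2)/2) :
    (∫ θ in (0:ℝ)..π,
        ((akhG β θ - β) * AkhRR m θ / b0) * ((akhG β θ - β) * AkhRR n θ / b0)
          * ((akhG β θ + β) / (2 * π * akhG β θ)))
      + (∫ θ in (0:ℝ)..π,
        (-((akhG β θ + β) * AkhRR m θ / b0)) * (-((akhG β θ + β) * AkhRR n θ / b0))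
          * ((akhG β θ + -β) / (2 * π * akhG β θ)))
      = if m = n then 1 else 0 := by
  have hπ : (0:ℝ) < π := Real.pi_pos
  have hcont1 : IntervalIntegrable
      (fun θ => ((akhG β θ - β) * AkhRR m θ / b0) * ((akhG β θ - β) * AkhRR n θ / b0)
        * ((akhG β θ + β) / (2 * π * akhG β θ))) volume 0 π := by
    apply Continuous.intervalIntegrable
    exact (((((akhG_continuous.sub continuous_const).mul (AkhRR_continuous m)).div_const b0)).mul
      ((((akhG_continuous.sub continuous_const).mul (AkhRR_continuous n)).div_const b0))).mul
      (akh_ratio_cont h0 h1 β)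
  have hcont2 : IntervalIntegrable
      (fun θ => (-((akhG β θ + β) * AkhRR m θ / b0)) * (-((akhG β θ + β) * AkhRR n θ / b0))
        * ((akhG β θ + -β) / (2 * π * akhG β θ))) volume 0 π := by
    apply Continuous.intervalIntegrable
    exact ((((((akhG_continuous.add continuous_const).mul (AkhRR_continuous m)).div_const b0)).neg.mul
      (((((akhG_continuous.add continuous_const).mul (AkhRR_continuous n)).div_const b0)).neg)).mul
      (akh_ratio_cont h0 h1 (-β)))
  rw [← intervalIntegral.integral_add hcont1 hcont2]
  have heq : ∀ θ : ℝ,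
      ((akhG β θ - β) * AkhRR m θ / b0) * ((akhG β θ - β) * AkhRR n θ / b0)
          * ((akhG β θ + β) / (2 * π * akhG β θ))
        + (-((akhG β θ + β) * AkhRR m θ / b0)) * (-((akhG β θ + β) * AkhRR n θ / b0))
          * ((akhG β θ + -β) / (2 * π * akhG β θ))
      = (2/π) * (Real.cos (((m:ℝ) + 1/2) * θ) * Real.cos (((n:ℝ) + 1/2) * θ)) := by
    intro θ
    have hg := akhG_pos h0 h1 θ
    have hg2 : (akhG β θ)^2 - β^2 = b0^2 * (1 + Real.cos θ) := by
      rw [akhG_sq h0 h1, hb0sq]; ring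
    have h2 : Real.cos (θ/2)^2 = 1/2 + Real.cos θ/2 := by
      have := Real.cos_sq (θ/2)
      rwa [show 2*(θ/2) = θ by ring] at this
    have hm2 := AkhRR_cos_half m θ
    have hn2 := AkhRR_cos_half n θ
    have hhalf : AkhRR m θ * AkhRR n θ * (1 + Real.cos θ)
        = 2 * (Real.cos (((m:ℝ) + 1/2) * θ) * Real.cos (((n:ℝ) + 1/2) * θ)) := by
      linear_combination (-(2 * AkhRR m θ * AkhRR n θ)) * h2
        + (2 * Real.cos (θ/2) * AkhRR n θ) * hm2
        + (2 * Real.cos (((m:ℝ) + 1/2) * θ)) * hn2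
    have hsum : (akhG β θ - β) * AkhRR m θ / b0 * ((akhG β θ - β) * AkhRR n θ / b0)
          * ((akhG β θ + β) / (2 * π * akhG β θ))
        + -((akhG β θ + β) * AkhRR m θ / b0) * -((akhG β θ + β) * AkhRR n θ / b0)
          * ((akhG β θ + -β) / (2 * π * akhG β θ))
        = AkhRR m θ * AkhRR n θ * (1 + Real.cos θ) / π := by
      field_simp
      linear_combination (2 * akhG β θ * AkhRR m θ * AkhRR n θ) * hg2
    rw [hsum]
    linear_combination (1/π) * hhalf
  rw [intervalIntegral.integral_congr (fun θ _ => heq θ)]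
  rw [intervalIntegral.integral_const_mul, orth_cos_half m n]
  by_cases hmn : m = n
  · subst hmn; rw [if_pos rfl, if_pos rfl]; field_simp
  · simp [hmn]

end Final2
lemma akh_alg_even (g β rr cosn cosn1 c b0 cc s2 : ℝ) (hb0 : b0 ≠ 0) (hcc : cc ≠ 0)
    (hg : g^2 - β^2 = b0^2 * (1+c)) (hI : (1+c) * rr = cosn1 + cosn) (hc2 : s2 * cc = b0) :
    cc⁻¹ * (g * ((g - β) * rr / b0) - -β * ((g - β) * rr / b0) - b0 * cosn) = s2 * cosn1 := by
  subst hc2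
  field_simp
  rw [div_eq_iff (left_ne_zero_of_mul hb0)]
  linear_combination rr * hg + (s2*cc)^2 * hI

lemma akh_alg_even_neg (g β rr cosn cosn1 c b0 cc s2 : ℝ) (hb0 : b0 ≠ 0) (hcc : cc ≠ 0)
    (hg : g^2 - β^2 = b0^2 * (1+c)) (hI : (1+c) * rr = cosn1 + cosn) (hc2 : s2 * cc = b0) :
    cc⁻¹ * (-g * (-((g + β) * rr / b0)) - -β * (-((g + β) * rr / b0)) - b0 * cosn) = s2 * cosn1 := by
  subst hc2
  field_simp
  rw [div_eq_iff (left_ne_zero_of_mul hb0)]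
  linear_combination rr * hg + (s2*cc)^2 * hI

lemma akh_alg_odd (g β rr cosn1 b0 cc s2 : ℝ) (hb0 : b0 ≠ 0) (hcc : cc ≠ 0)
    (hs2 : s2 * s2 = 2) (hc2 : s2 * cc = b0) :
    cc⁻¹ * (g * (s2 * cosn1) - β * (s2 * cosn1) - cc * ((g - β) * rr / b0)) =
      (g - β) * (2 * cosn1 - rr) / b0 := by
  subst hc2
  field_simp
  rw [div_left_inj' (left_ne_zero_of_mul hb0)]
  linear_combination (g - β) * cosn1 * hs2

lemma akh_alg_odd_neg (g β rr cosn1 b0 cc s2 : ℝ) (hb0 : b0 ≠ 0) (hcc : cc ≠ 0)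
    (hs2 : s2 * s2 = 2) (hc2 : s2 * cc = b0) :
    cc⁻¹ * (-g * (s2 * cosn1) - β * (s2 * cosn1) - cc * (-((g + β) * rr / b0))) =
      -((g + β) * (2 * cosn1 - rr) / b0) := by
  subst hc2
  field_simp
  rw [← neg_div, div_left_inj' (left_ne_zero_of_mul hb0)]
  linear_combination -((g + β) * cosn1) * hs2

/-- Let `β ∈ (0,1)`, `Σ_β = [-1, -β] ∪ [β, 1]`, and let
`w_β(x) = (1/π)·√|x + β| / (√(1 - x²)·√|x - β|)` be the Akhiezer weight.  The polynomials
defined by `p_0 = 1`, `p_1(x) = (x - a_0)/b_0`,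
`p_{k+1}(x) = (x·p_k(x) - a_k·p_k(x) - b_{k-1}·p_{k-1}(x))/b_k` for `k ≥ 1`, with
`a_k = (-1)^k·β`, `b_0 = √((1 - β²)/2)`, `b_k = √(1 - β²)/2` for `k ≥ 1`, are orthonormal
with respect to `w_β`:  `∫_{Σ_β} p_j p_k w_β = δ_{jk}` (in particular `∫_{Σ_β} w_β = 1`). -/
theorem akhiezer_polynomials_orthonormal (β : ℝ) (hβ : β ∈ Set.Ioo (0 : ℝ) 1)
    (w : ℝ → ℝ)
    (hw : ∀ x, w x = (1 / Real.pi) * Real.sqrt |x + β| /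
      (Real.sqrt (1 - x ^ 2) * Real.sqrt |x - β|))
    (a b : ℕ → ℝ)
    (ha : ∀ k, a k = (-1 : ℝ) ^ k * β)
    (hb0 : b 0 = Real.sqrt ((1 - β ^ 2) / 2))
    (hb : ∀ k, 1 ≤ k → b k = Real.sqrt (1 - β ^ 2) / 2)
    (p : ℕ → Polynomial ℝ)
    (hp0 : p 0 = 1)
    (hp1 : p 1 = Polynomial.C (b 0)⁻¹ * (Polynomial.X - Polynomial.C (a 0)))
    (hprec : ∀ k, 1 ≤ k → p (k + 1) =
      Polynomial.C (b k)⁻¹ *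
        (Polynomial.X * p k - Polynomial.C (a k) * p k - Polynomial.C (b (k - 1)) * p (k - 1))) :
    ∀ j k, (∫ x in Set.Icc (-1 : ℝ) (-β) ∪ Set.Icc β 1,
        (p j).eval x * (p k).eval x * w x) = if j = k then 1 else 0 := by
  obtain ⟨h0, h1⟩ := hβ
  intro j k
  have hb2 : (0:ℝ) < 1 - β^2 := by nlinarith
  have hπ : (0:ℝ) < π := Real.pi_pos
  have hb0pos : 0 < b 0 := by rw [hb0]; exact Real.sqrt_pos.mpr (by positivity)
  have hb0sq : (b 0)^2 = (1 - β^2)/2 := by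
    rw [hb0]; rw [Real.sq_sqrt (by positivity)]
  have hs2 : Real.sqrt 2 * Real.sqrt 2 = 2 := Real.mul_self_sqrt (by norm_num)
  have hcc : (0:ℝ) < Real.sqrt (1-β^2)/2 := by positivity
  have hc2 : Real.sqrt 2 * (Real.sqrt (1 - β^2)/2) = b 0 := by
    have hsq : (Real.sqrt 2 * (Real.sqrt (1-β^2)/2))^2 = (1-β^2)/2 := by
      rw [mul_pow, div_pow, Real.sq_sqrt (by norm_num : (0:ℝ) ≤ 2), Real.sq_sqrt hb2.le]
      ring
    rw [hb0, ← hsq, Real.sqrt_sq (by positivity)]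
  have haeven : ∀ t : ℕ, a (2*t) = β := by
    intro t; rw [ha, pow_mul]; norm_num
  have haodd : ∀ t : ℕ, a (2*t+1) = -β := by
    intro t; rw [ha, pow_succ, pow_mul]; norm_num
  -- closed trig forms of the polynomials under the substitution x = ±akhG β θ
  have key : ∀ n : ℕ,
      (∀ θ : ℝ, (p (2*n)).eval (akhG β θ) = akhE n θ) ∧
      (∀ θ : ℝ, (p (2*n)).eval (-akhG β θ) = akhE n θ) ∧
      (∀ θ : ℝ, (p (2*n+1)).eval (akhG β θ) = (akhG β θ - β) * AkhRR n θ / b 0) ∧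
      (∀ θ : ℝ, (p (2*n+1)).eval (-akhG β θ) = -((akhG β θ + β) * AkhRR n θ / b 0)) := by
    intro n
    induction n with
    | zero =>
      refine ⟨fun θ => ?_, fun θ => ?_, fun θ => ?_, fun θ => ?_⟩
      · simp [hp0, akhE]
      · simp [hp0, akhE]
      · rw [show 2*0+1 = 1 by rfl, hp1]
        simp only [Polynomial.eval_mul, Polynomial.eval_sub, Polynomial.eval_X,
          Polynomial.eval_C, AkhRR]
        rw [ha 0]
        norm_num
        ring
      · rw [show 2*0+1 = 1 by rfl, hp1]
        simp only [Polynomial.eval_mul, Polynomial.eval_sub, Polynomial.eval_X,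
          Polynomial.eval_C, AkhRR]
        rw [ha 0]
        norm_num
        ring
    | succ n ih =>
      obtain ⟨ih1, ih2, ih3, ih4⟩ := ih
      have hrec1 := hprec (2*n+1) (by omega)
      rw [show 2*n+1-1 = 2*n by omega] at hrec1
      have hbodd : b (2*n+1) = Real.sqrt (1-β^2)/2 := hb _ (by omega)
      have hbE : ∀ θ : ℝ, b (2*n) * akhE n θ = b 0 * Real.cos (n*θ) := by
        intro θ
        by_cases hn : n = 0
        · subst hn
          simp [akhE]
        · rw [hb (2*n) (by omega)]
          simp only [akhE, if_neg hn]
          linear_combination Real.cos ((n:ℝ)*θ) * hc2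
      have hg2 : ∀ θ : ℝ, (akhG β θ)^2 - β^2 = (b 0)^2 * (1+Real.cos θ) := by
        intro θ; rw [akhG_sq h0 h1, hb0sq]; ring
      have heven1 : ∀ θ : ℝ, (p (2*(n+1))).eval (akhG β θ) = akhE (n+1) θ := by
        intro θ
        rw [show 2*(n+1) = (2*n+1)+1 by ring, hrec1]
        simp only [Polynomial.eval_mul, Polynomial.eval_sub, Polynomial.eval_X,
          Polynomial.eval_C]
        rw [haodd n, hbodd, ih3 θ, ih1 θ, hbE θ]
        have hrhs : akhE (n+1) θ = Real.sqrt 2 * Real.cos (((n:ℝ)+1) * θ) := by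
          simp only [akhE, if_neg (Nat.succ_ne_zero n)]
          push_cast
          try ring_nf
        rw [hrhs]
        exact akh_alg_even (akhG β θ) β (AkhRR n θ) (Real.cos ((n:ℝ)*θ))
          (Real.cos (((n:ℝ)+1)*θ)) (Real.cos θ) (b 0) (Real.sqrt (1-β^2)/2) (Real.sqrt 2)
          hb0pos.ne' hcc.ne' (hg2 θ) (AkhRR_one_add_cos n θ) hc2
      have heven2 : ∀ θ : ℝ, (p (2*(n+1))).eval (-akhG β θ) = akhE (n+1) θ := by
        intro θ
        rw [show 2*(n+1) = (2*n+1)+1 by ring, hrec1]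
        simp only [Polynomial.eval_mul, Polynomial.eval_sub, Polynomial.eval_X,
          Polynomial.eval_C]
        rw [haodd n, hbodd, ih4 θ, ih2 θ, hbE θ]
        have hrhs : akhE (n+1) θ = Real.sqrt 2 * Real.cos (((n:ℝ)+1) * θ) := by
          simp only [akhE, if_neg (Nat.succ_ne_zero n)]
          push_cast
          try ring_nf
        rw [hrhs]
        exact akh_alg_even_neg (akhG β θ) β (AkhRR n θ) (Real.cos ((n:ℝ)*θ))
          (Real.cos (((n:ℝ)+1)*θ)) (Real.cos θ) (b 0) (Real.sqrt (1-β^2)/2) (Real.sqrt 2)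
          hb0pos.ne' hcc.ne' (hg2 θ) (AkhRR_one_add_cos n θ) hc2
      have hrec2 := hprec (2*n+2) (by omega)
      rw [show 2*n+2-1 = 2*n+1 by omega] at hrec2
      have hbe1 : b (2*n+2) = Real.sqrt (1-β^2)/2 := hb _ (by omega)
      have hae : a (2*n+2) = β := by
        have := haeven (n+1); rwa [show 2*(n+1) = 2*n+2 by ring] at this
      have hrrsucc : ∀ θ : ℝ, AkhRR (n+1) θ = 2 * Real.cos (((n:ℝ)+1) * θ) - AkhRR n θ := by
        intro θ
        simp only [AkhRR]
        try push_cast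
        try ring_nf
      refine ⟨heven1, heven2, fun θ => ?_, fun θ => ?_⟩
      · rw [show 2*(n+1)+1 = (2*n+2)+1 by ring, hrec2]
        simp only [Polynomial.eval_mul, Polynomial.eval_sub, Polynomial.eval_X,
          Polynomial.eval_C]
        have he := heven1 θ
        rw [hae, hbe1, hbodd, ih3 θ, show (2*n+2) = 2*(n+1) by ring, he, hrrsucc θ]
        have hrhs : akhE (n+1) θ = Real.sqrt 2 * Real.cos (((n:ℝ)+1) * θ) := by
          simp only [akhE, if_neg (Nat.succ_ne_zero n)]
          push_cast
          try ring_nf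
        rw [hrhs]
        exact akh_alg_odd (akhG β θ) β (AkhRR n θ) (Real.cos (((n:ℝ)+1)*θ)) (b 0)
          (Real.sqrt (1-β^2)/2) (Real.sqrt 2) hb0pos.ne' hcc.ne' hs2 hc2
      · rw [show 2*(n+1)+1 = (2*n+2)+1 by ring, hrec2]
        simp only [Polynomial.eval_mul, Polynomial.eval_sub, Polynomial.eval_X,
          Polynomial.eval_C]
        have he := heven2 θ
        rw [hae, hbe1, hbodd, ih4 θ, show (2*n+2) = 2*(n+1) by ring, he, hrrsucc θ]
        have hrhs : akhE (n+1) θ = Real.sqrt 2 * Real.cos (((n:ℝ)+1) * θ) := by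
          simp only [akhE, if_neg (Nat.succ_ne_zero n)]
          push_cast
          try ring_nf
        rw [hrhs]
        exact akh_alg_odd_neg (akhG β θ) β (AkhRR n θ) (Real.cos (((n:ℝ)+1)*θ)) (b 0)
          (Real.sqrt (1-β^2)/2) (Real.sqrt 2) hb0pos.ne' hcc.ne' hs2 hc2
  -- measure-theoretic reduction
  have hIoo_eq : ∀ Φ : ℝ → ℝ, (∫ θ in Set.Ioo (0:ℝ) π, Φ θ) = ∫ θ in (0:ℝ)..π, Φ θ := by
    intro Φ
    rw [intervalIntegral.integral_of_le hπ.le, MeasureTheory.integral_Ioc_eq_integral_Ioo]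
  have hcontP : Continuous (fun θ => (p j).eval (akhG β θ) * (p k).eval (akhG β θ) *
      ((akhG β θ + β) / (2 * π * akhG β θ))) :=
    (((p j).continuous.comp akhG_continuous).mul
      ((p k).continuous.comp akhG_continuous)).mul (akh_ratio_cont h0 h1 β)
  have hcontN : Continuous (fun θ => (p j).eval (-akhG β θ) * (p k).eval (-akhG β θ) *
      ((akhG β θ + -β) / (2 * π * akhG β θ))) :=
    (((p j).continuous.comp akhG_continuous.neg).mul
      ((p k).continuous.comp akhG_continuous.neg)).mul (akh_ratio_cont h0 h1 (-β))
  have hEqP : Set.EqOn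
      (fun θ => |(-((1 - β^2) * Real.sin θ) / (4 * akhG β θ))| *
        ((p j).eval (akhG β θ) * (p k).eval (akhG β θ) * w (akhG β θ)))
      (fun θ => (p j).eval (akhG β θ) * (p k).eval (akhG β θ) *
        ((akhG β θ + β) / (2 * π * akhG β θ))) (Set.Ioo 0 π) := by
    intro θ hθ
    have hwx : w (akhG β θ) = akhW β (akhG β θ) := by rw [hw]; rfl
    simp only
    rw [hwx, show |(-((1 - β^2) * Real.sin θ) / (4 * akhG β θ))| *
        ((p j).eval (akhG β θ) * (p k).eval (akhG β θ) * akhW β (akhG β θ))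
      = (p j).eval (akhG β θ) * (p k).eval (akhG β θ) *
        (|(-((1 - β^2) * Real.sin θ) / (4 * akhG β θ))| * akhW β (akhG β θ)) from by ring,
      akh_weight_pos h0 h1 hθ]
  have hEqN : Set.EqOn
      (fun θ => |(1 - β^2) * Real.sin θ / (4 * akhG β θ)| *
        ((p j).eval (-akhG β θ) * (p k).eval (-akhG β θ) * w (-akhG β θ)))
      (fun θ => (p j).eval (-akhG β θ) * (p k).eval (-akhG β θ) *
        ((akhG β θ + -β) / (2 * π * akhG β θ))) (Set.Ioo 0 π) := by
    intro θ hθ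
    have hwx : w (-akhG β θ) = akhW β (-akhG β θ) := by rw [hw]; rfl
    simp only
    rw [hwx, show |(1 - β^2) * Real.sin θ / (4 * akhG β θ)| *
        ((p j).eval (-akhG β θ) * (p k).eval (-akhG β θ) * akhW β (-akhG β θ))
      = (p j).eval (-akhG β θ) * (p k).eval (-akhG β θ) *
        (|(1 - β^2) * Real.sin θ / (4 * akhG β θ)| * akhW β (-akhG β θ)) from by ring,
      akh_weight_neg h0 h1 hθ]
    ring
  have hIntP : MeasureTheory.IntegrableOn
      (fun θ => (p j).eval (akhG β θ) * (p k).eval (akhG β θ) *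
        ((akhG β θ + β) / (2 * π * akhG β θ))) (Set.Ioo 0 π) :=
    (hcontP.integrableOn_Icc).mono_set Set.Ioo_subset_Icc_self
  have hIntN : MeasureTheory.IntegrableOn
      (fun θ => (p j).eval (-akhG β θ) * (p k).eval (-akhG β θ) *
        ((akhG β θ + -β) / (2 * π * akhG β θ))) (Set.Ioo 0 π) :=
    (hcontN.integrableOn_Icc).mono_set Set.Ioo_subset_Icc_self
  have hIntFP := hIntP.congr_fun hEqP.symm measurableSet_Ioo
  have hIntFN := hIntN.congr_fun hEqN.symm measurableSet_Ioo
  have hIccP : MeasureTheory.IntegrableOn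
      (fun x => (p j).eval x * (p k).eval x * w x) (Set.Icc β 1) := by
    rw [integrableOn_Icc_iff_integrableOn_Ioo]
    exact (akh_subst_pos_int h0 h1 _).mpr hIntFP
  have hIccN : MeasureTheory.IntegrableOn
      (fun x => (p j).eval x * (p k).eval x * w x) (Set.Icc (-1:ℝ) (-β)) := by
    rw [integrableOn_Icc_iff_integrableOn_Ioo]
    exact (akh_subst_neg_int h0 h1 _).mpr hIntFN
  have hdisj : Disjoint (Set.Icc (-1:ℝ) (-β)) (Set.Icc β 1) := by
    rw [Set.disjoint_left]
    intro x hx hx'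
    have := hx.2; have := hx'.1
    linarith
  have hred : (∫ x in Set.Icc (-1 : ℝ) (-β) ∪ Set.Icc β 1,
        (p j).eval x * (p k).eval x * w x)
      = (∫ θ in (0:ℝ)..π, (p j).eval (akhG β θ) * (p k).eval (akhG β θ) *
          ((akhG β θ + β) / (2 * π * akhG β θ)))
        + (∫ θ in (0:ℝ)..π, (p j).eval (-akhG β θ) * (p k).eval (-akhG β θ) *
          ((akhG β θ + -β) / (2 * π * akhG β θ))) := by
    calc (∫ x in Set.Icc (-1 : ℝ) (-β) ∪ Set.Icc β 1, (p j).eval x * (p k).eval x * w x)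
        = (∫ x in Set.Icc (-1:ℝ) (-β), (p j).eval x * (p k).eval x * w x)
          + (∫ x in Set.Icc β 1, (p j).eval x * (p k).eval x * w x) :=
          MeasureTheory.setIntegral_union hdisj measurableSet_Icc hIccN hIccP
      _ = (∫ x in Set.Ioo (-1:ℝ) (-β), (p j).eval x * (p k).eval x * w x)
          + (∫ x in Set.Ioo β 1, (p j).eval x * (p k).eval x * w x) := by
          rw [MeasureTheory.integral_Icc_eq_integral_Ioo,
            MeasureTheory.integral_Icc_eq_integral_Ioo]
      _ = (∫ θ in Set.Ioo (0:ℝ) π, |(1 - β^2) * Real.sin θ / (4 * akhG β θ)| *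
            ((p j).eval (-akhG β θ) * (p k).eval (-akhG β θ) * w (-akhG β θ)))
          + (∫ θ in Set.Ioo (0:ℝ) π, |(-((1 - β^2) * Real.sin θ) / (4 * akhG β θ))| *
            ((p j).eval (akhG β θ) * (p k).eval (akhG β θ) * w (akhG β θ))) := by
          rw [akh_subst_neg h0 h1, akh_subst_pos h0 h1]
      _ = (∫ θ in Set.Ioo (0:ℝ) π, (p j).eval (-akhG β θ) * (p k).eval (-akhG β θ) *
            ((akhG β θ + -β) / (2 * π * akhG β θ)))
          + (∫ θ in Set.Ioo (0:ℝ) π, (p j).eval (akhG β θ) * (p k).eval (akhG β θ) *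
            ((akhG β θ + β) / (2 * π * akhG β θ))) :=
          congrArg₂ (· + ·) (MeasureTheory.setIntegral_congr_fun measurableSet_Ioo hEqN)
            (MeasureTheory.setIntegral_congr_fun measurableSet_Ioo hEqP)
      _ = _ := by
          rw [hIoo_eq, hIoo_eq]
          ring
  rw [hred]
  clear hred hIntFP hIntFN hIntP hIntN hIccP hIccN hEqP hEqN hcontP hcontN hdisj
  rcases Nat.even_or_odd j with hj | hj <;> rcases Nat.even_or_odd k with hk | hk
  · -- even, even
    obtain ⟨m, hm⟩ := hj
    obtain ⟨n, hn⟩ := hk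
    have hm' : j = 2*m := by omega
    have hn' : k = 2*n := by omega
    subst hm'; subst hn'
    have e1 : ∀ θ : ℝ, (p (2*m)).eval (akhG β θ) * (p (2*n)).eval (akhG β θ) *
        ((akhG β θ + β) / (2 * π * akhG β θ))
        = akhE m θ * akhE n θ * ((akhG β θ + β) / (2 * π * akhG β θ)) := fun θ => by
      rw [(key m).1 θ, (key n).1 θ]
    have e2 : ∀ θ : ℝ, (p (2*m)).eval (-akhG β θ) * (p (2*n)).eval (-akhG β θ) *
        ((akhG β θ + -β) / (2 * π * akhG β θ))
        = akhE m θ * akhE n θ * ((akhG β θ + -β) / (2 * π * akhG β θ)) := fun θ => by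
      rw [(key m).2.1 θ, (key n).2.1 θ]
    rw [intervalIntegral.integral_congr (fun θ _ => e1 θ),
      intervalIntegral.integral_congr (fun θ _ => e2 θ),
      akh_final_even_even h0 h1 m n]
    by_cases hmn : m = n
    · subst hmn; simp
    · rw [if_neg hmn, if_neg (by omega)]
  · -- even, odd
    obtain ⟨m, hm⟩ := hj
    obtain ⟨n, hn⟩ := hk
    have hm' : j = 2*m := by omega
    subst hm'; subst hn
    have e1 : ∀ θ : ℝ, (p (2*m)).eval (akhG β θ) * (p (2*n+1)).eval (akhG β θ) *
        ((akhG β θ + β) / (2 * π * akhG β θ))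
        = akhE m θ * ((akhG β θ - β) * AkhRR n θ / b 0) *
          ((akhG β θ + β) / (2 * π * akhG β θ)) := fun θ => by
      rw [(key m).1 θ, (key n).2.2.1 θ]
    have e2 : ∀ θ : ℝ, (p (2*m)).eval (-akhG β θ) * (p (2*n+1)).eval (-akhG β θ) *
        ((akhG β θ + -β) / (2 * π * akhG β θ))
        = akhE m θ * (-((akhG β θ + β) * AkhRR n θ / b 0)) *
          ((akhG β θ + -β) / (2 * π * akhG β θ)) := fun θ => by
      rw [(key m).2.1 θ, (key n).2.2.2 θ]
    rw [intervalIntegral.integral_congr (fun θ _ => e1 θ),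
      intervalIntegral.integral_congr (fun θ _ => e2 θ),
      akh_final_even_odd h0 h1 m n (b 0), if_neg (by omega)]
  · -- odd, even
    obtain ⟨m, hm⟩ := hj
    obtain ⟨n, hn⟩ := hk
    have hn' : k = 2*n := by omega
    subst hm; subst hn'
    have e1 : ∀ θ : ℝ, (p (2*m+1)).eval (akhG β θ) * (p (2*n)).eval (akhG β θ) *
        ((akhG β θ + β) / (2 * π * akhG β θ))
        = akhE n θ * ((akhG β θ - β) * AkhRR m θ / b 0) *
          ((akhG β θ + β) / (2 * π * akhG β θ)) := fun θ => by
      rw [(key m).2.2.1 θ, (key n).1 θ]; ring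
    have e2 : ∀ θ : ℝ, (p (2*m+1)).eval (-akhG β θ) * (p (2*n)).eval (-akhG β θ) *
        ((akhG β θ + -β) / (2 * π * akhG β θ))
        = akhE n θ * (-((akhG β θ + β) * AkhRR m θ / b 0)) *
          ((akhG β θ + -β) / (2 * π * akhG β θ)) := fun θ => by
      rw [(key m).2.2.2 θ, (key n).2.1 θ]; ring
    rw [intervalIntegral.integral_congr (fun θ _ => e1 θ),
      intervalIntegral.integral_congr (fun θ _ => e2 θ),
      akh_final_even_odd h0 h1 n m (b 0), if_neg (by omega)]
  · -- odd, odd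
    obtain ⟨m, hm⟩ := hj
    obtain ⟨n, hn⟩ := hk
    subst hm; subst hn
    have e1 : ∀ θ : ℝ, (p (2*m+1)).eval (akhG β θ) * (p (2*n+1)).eval (akhG β θ) *
        ((akhG β θ + β) / (2 * π * akhG β θ))
        = ((akhG β θ - β) * AkhRR m θ / b 0) * ((akhG β θ - β) * AkhRR n θ / b 0) *
          ((akhG β θ + β) / (2 * π * akhG β θ)) := fun θ => by
      rw [(key m).2.2.1 θ, (key n).2.2.1 θ]
    have e2 : ∀ θ : ℝ, (p (2*m+1)).eval (-akhG β θ) * (p (2*n+1)).eval (-akhG β θ) *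
        ((akhG β θ + -β) / (2 * π * akhG β θ))
        = (-((akhG β θ + β) * AkhRR m θ / b 0)) * (-((akhG β θ + β) * AkhRR n θ / b 0)) *
          ((akhG β θ + -β) / (2 * π * akhG β θ)) := fun θ => by
      rw [(key m).2.2.2 θ, (key n).2.2.2 θ]
    rw [intervalIntegral.integral_congr (fun θ _ => e1 θ),
      intervalIntegral.integral_congr (fun θ _ => e2 θ),
      akh_final_odd_odd h0 h1 m n (b 0) hb0pos hb0sq]
    by_cases hmn : m = n
    · subst hmn; simp
    · rw [if_neg hmn, if_neg (by omega)]
end
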